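/- arXiv:2601.09646 — 2 statements merged into one kernel-verified Lean document; each statement's English description precedes it below -/
import Mathlib

section
/- Suppose lim_{x→a⁺} s(x) = ∞, the right boundary b is natural (lim_{x→b} s(x)·M[a,x] = ∞ and ∫_{x₀}^{b} M[x₀,v] s(v) dv = ∞), μ extends continuously to x = a with a finite value μ(a), there exists x̂₀ ∈ (a,b) such that μ is strictly increasing on (a, x̂₀) and both c and μ are concave on (x̂₀, b), and there exists x̃ ∈ (a,b) with h(x̃) > γ c̄(b). Let ŷ be the unique maximizer of h on (a,b), and define U(x) = h(ŷ) ξ(x) − γ g(x) for x ∈ (a, ŷ] and U(x) = U(ŷ) + p (x − ŷ) for x ∈ (ŷ, b). Then U is twice continuously differentiable on (a,b), and the pair (U, h(ŷ)) solves the singular-control HJB equation: max{ (σ(x)²/2) U″(x) + μ(x) U′(x) + γ c(x) − h(ŷ), −U′(x) + p } = 0 for all x ∈ (a,b); in particular (σ²/2)U″ + μU′ + γc − h(ŷ) = 0 and U′ ≥ p on (a, ŷ), while U′ = p and (σ²/2)U″ + μU′ + γc − h(ŷ) < 0 on (ŷ, b). -/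
open MeasureTheory Filter Set Topology
open scoped Classical

noncomputable section

/-- The state interval `(a, b)` where `a` is real and `b ∈ (a, ∞]`. -/
def stInt (a : ℝ) (b : EReal) : Set ℝ := {x : ℝ | a < x ∧ (x : EReal) < b}

/-- The filter of approach to the right endpoint `b ∈ (a, ∞]`:
`atTop` when `b = ∞`, and the left-neighborhood filter of `b` otherwise. -/
def atB (b : EReal) : Filter ℝ :=
  if b = ⊤ then Filter.atTop else nhdsWithin b.toReal (Set.Iio b.toReal)

/-- The scale density `s(x) = exp(-∫_{x₀}^x 2μ/σ²)`. -/
def sDen (μ σ : ℝ → ℝ) (x₀ x : ℝ) : ℝ :=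
  Real.exp (-(∫ y in x₀..x, 2 * μ y / (σ y) ^ 2))

/-- The speed density `m(x) = 2/(σ(x)² s(x))`. -/
def mDen (μ σ : ℝ → ℝ) (x₀ x : ℝ) : ℝ :=
  2 / ((σ x) ^ 2 * sDen μ σ x₀ x)

/-- `M[a,x] = ∫_a^x m(u) du`. -/
def Mab (μ σ : ℝ → ℝ) (x₀ a x : ℝ) : ℝ :=
  ∫ u in Set.Ioo a x, mDen μ σ x₀ u

/-- The time potential `ξ(x) = ∫_{x₀}^x M[a,v] s(v) dv`. -/
def xiF (μ σ : ℝ → ℝ) (x₀ a x : ℝ) : ℝ :=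
  ∫ v in x₀..x, Mab μ σ x₀ a v * sDen μ σ x₀ v

/-- The running reward potential `g(x) = ∫_{x₀}^x (∫_a^v c(u) m(u) du) s(v) dv`. -/
def gF (μ σ c : ℝ → ℝ) (x₀ a x : ℝ) : ℝ :=
  ∫ v in x₀..x, (∫ u in Set.Ioo a v, c u * mDen μ σ x₀ u) * sDen μ σ x₀ v

/-- `h(x) = (∫_a^x (γ c(u) + p μ(u)) m(u) du) / M[a,x]`. -/
def hF (μ σ c : ℝ → ℝ) (x₀ a p γ x : ℝ) : ℝ :=
  (∫ u in Set.Ioo a x, (γ * c u + p * μ u) * mDen μ σ x₀ u) / Mab μ σ x₀ a x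

/-- The long-term average reward `F(w,y)` of the `(w,y)`-impulse policy. -/
def FF (μ σ c : ℝ → ℝ) (x₀ a p K γ w y : ℝ) : ℝ :=
  (p * (y - w) - K + γ * (gF μ σ c x₀ a y - gF μ σ c x₀ a w)) /
    (xiF μ σ x₀ a y - xiF μ σ x₀ a w)

/-- `c̄(b)`: equals `⟨c,π⟩` when `M[a,b] < ∞` and the boundary value `c(b)` otherwise. -/
def cbar (μ σ c : ℝ → ℝ) (x₀ a : ℝ) (b : EReal) (cb : ℝ) : ℝ :=
  if MeasureTheory.IntegrableOn (mDen μ σ x₀) (stInt a b) MeasureTheory.volume then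
    (∫ u in stInt a b, c u * mDen μ σ x₀ u) / (∫ u in stInt a b, mDen μ σ x₀ u)
  else cb

section Aux

variable {a : ℝ} {b : EReal} {μ σ c : ℝ → ℝ} {x₀ : ℝ} {p γ : ℝ}

lemma mem_stInt {x : ℝ} : x ∈ stInt a b ↔ a < x ∧ (x : EReal) < b := Iff.rfl

lemma isOpen_stInt : IsOpen (stInt a b) := by
  have : stInt a b = Set.Ioi a ∩ ((↑) : ℝ → EReal) ⁻¹' (Set.Iio b) := rfl
  rw [this]
  exact isOpen_Ioi.inter (isOpen_Iio.preimage continuous_coe_real_ereal)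

lemma stInt_ordConn : (stInt a b).OrdConnected := by
  constructor
  rintro x ⟨hx1, hx2⟩ y ⟨hy1, hy2⟩ z ⟨hz1, hz2⟩
  exact ⟨lt_of_lt_of_le hx1 hz1, lt_of_le_of_lt (EReal.coe_le_coe_iff.2 hz2) hy2⟩

lemma uIcc_subset_stInt {x y : ℝ} (hx : x ∈ stInt a b) (hy : y ∈ stInt a b) :
    Set.uIcc x y ⊆ stInt a b := stInt_ordConn.uIcc_subset hx hy

lemma Ioo_subset_stInt {x : ℝ} (hx : x ∈ stInt a b) : Set.Ioo a x ⊆ stInt a b := by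
  rintro u ⟨hu1, hu2⟩
  exact ⟨hu1, lt_trans (EReal.coe_lt_coe_iff.2 hu2) hx.2⟩

lemma mid_mem_stInt {x : ℝ} (hx : x ∈ stInt a b) : (a + x) / 2 ∈ stInt a b := by
  obtain ⟨h1, h2⟩ := hx
  have ha : a < (a + x) / 2 := by linarith
  have hxx : (a + x) / 2 < x := by linarith
  exact ⟨ha, lt_trans (EReal.coe_lt_coe_iff.2 hxx) h2⟩

lemma sDen_pos (x : ℝ) : 0 < sDen μ σ x₀ x := Real.exp_pos _

lemma mDen_pos (hσpos : ∀ x ∈ stInt a b, 0 < (σ x) ^ 2) {x : ℝ} (hx : x ∈ stInt a b) :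
    0 < mDen μ σ x₀ x :=
  div_pos two_pos (mul_pos (hσpos x hx) (sDen_pos x))

lemma contOn_fQ (hμcont : ContinuousOn μ (stInt a b)) (hσcont : ContinuousOn σ (stInt a b))
    (hσpos : ∀ x ∈ stInt a b, 0 < (σ x) ^ 2) :
    ContinuousOn (fun x => 2 * μ x / (σ x) ^ 2) (stInt a b) :=
  (continuousOn_const.mul hμcont).div (hσcont.pow 2) (fun x hx => (hσpos x hx).ne')

lemma hasDerivAt_sDen (hμcont : ContinuousOn μ (stInt a b)) (hσcont : ContinuousOn σ (stInt a b))
    (hσpos : ∀ x ∈ stInt a b, 0 < (σ x) ^ 2) (hx₀ : x₀ ∈ stInt a b) {x : ℝ}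
    (hx : x ∈ stInt a b) :
    HasDerivAt (sDen μ σ x₀) (-(2 * μ x / (σ x) ^ 2) * sDen μ σ x₀ x) x := by
  have hc := contOn_fQ hμcont hσcont hσpos
  have hF : HasDerivAt (fun t => ∫ y in x₀..t, 2 * μ y / (σ y) ^ 2)
      (2 * μ x / (σ x) ^ 2) x := by
    apply intervalIntegral.integral_hasDerivAt_right
    · exact (hc.mono (uIcc_subset_stInt hx₀ hx)).intervalIntegrable
    · exact hc.stronglyMeasurableAtFilter isOpen_stInt x hx
    · exact hc.continuousAt (isOpen_stInt.mem_nhds hx)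
  have h2 := (hF.neg).exp
  have he : sDen μ σ x₀ = fun t => Real.exp (-(∫ y in x₀..t, 2 * μ y / (σ y) ^ 2)) := rfl
  rw [he]
  convert h2 using 1
  show -(2 * μ x / σ x ^ 2) * sDen μ σ x₀ x = sDen μ σ x₀ x * -(2 * μ x / σ x ^ 2)
  exact mul_comm _ _
  rfl

lemma contOn_sDen (hμcont : ContinuousOn μ (stInt a b)) (hσcont : ContinuousOn σ (stInt a b))
    (hσpos : ∀ x ∈ stInt a b, 0 < (σ x) ^ 2) (hx₀ : x₀ ∈ stInt a b) :
    ContinuousOn (sDen μ σ x₀) (stInt a b) := fun x hx =>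
  ((hasDerivAt_sDen hμcont hσcont hσpos hx₀ hx).continuousAt).continuousWithinAt

lemma contOn_mDen (hμcont : ContinuousOn μ (stInt a b)) (hσcont : ContinuousOn σ (stInt a b))
    (hσpos : ∀ x ∈ stInt a b, 0 < (σ x) ^ 2) (hx₀ : x₀ ∈ stInt a b) :
    ContinuousOn (mDen μ σ x₀) (stInt a b) := by
  apply continuousOn_const.div ((hσcont.pow 2).mul (contOn_sDen hμcont hσcont hσpos hx₀))
  exact fun x hx => (mul_pos (hσpos x hx) (sDen_pos x)).ne'

lemma hasDerivAt_inv_sDen (hμcont : ContinuousOn μ (stInt a b))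
    (hσcont : ContinuousOn σ (stInt a b))
    (hσpos : ∀ x ∈ stInt a b, 0 < (σ x) ^ 2) (hx₀ : x₀ ∈ stInt a b) {x : ℝ}
    (hx : x ∈ stInt a b) :
    HasDerivAt (fun t => (sDen μ σ x₀ t)⁻¹) (μ x * mDen μ σ x₀ x) x := by
  have h := (hasDerivAt_sDen hμcont hσcont hσpos hx₀ hx).inv (sDen_pos (μ := μ) (σ := σ) (x₀ := x₀) x).ne'
  refine h.congr_deriv ?_
  rw [mDen]
  have hne : sDen μ σ x₀ x ≠ 0 := (sDen_pos x).ne'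
  have hσne : (σ x) ^ 2 ≠ 0 := (hσpos x hx).ne'
  field_simp

lemma intOn_split {w : ℝ → ℝ} {x y : ℝ} (hay : a < y) (hyx : y ≤ x)
    (hw : MeasureTheory.IntegrableOn w (Set.Ioo a x) MeasureTheory.volume) :
    ∫ u in Set.Ioo a x, w u = (∫ u in Set.Ioo a y, w u) + ∫ u in y..x, w u := by
  have hunion : Set.Ioo a y ∪ Set.Ico y x = Set.Ioo a x := Set.Ioo_union_Ico_eq_Ioo hay hyx
  have hsub1 : Set.Ioo a y ⊆ Set.Ioo a x := fun u hu => ⟨hu.1, lt_of_lt_of_le hu.2 hyx⟩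
  have hsub2 : Set.Ico y x ⊆ Set.Ioo a x := fun u hu => ⟨lt_of_lt_of_le hay hu.1, hu.2⟩
  have hdisj : Disjoint (Set.Ioo a y) (Set.Ico y x) := by
    apply Set.disjoint_left.2
    rintro u ⟨_, h2⟩ ⟨h3, _⟩
    exact absurd h3 (not_le.2 h2)
  rw [← hunion, MeasureTheory.setIntegral_union hdisj measurableSet_Ico (hw.mono_set hsub1)
    (hw.mono_set hsub2)]
  congr 1
  rw [MeasureTheory.integral_Ico_eq_integral_Ioo, intervalIntegral.integral_of_le hyx,
    MeasureTheory.integral_Ioc_eq_integral_Ioo]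

lemma tendsto_intOo_zero {w : ℝ → ℝ} {x : ℝ} (hax : a < x)
    (hw : MeasureTheory.IntegrableOn w (Set.Ioo a x) MeasureTheory.volume) :
    Tendsto (fun y => ∫ u in Set.Ioo a y, w u) (nhdsWithin a (Set.Ioi a)) (nhds 0) := by
  have hind : MeasureTheory.Integrable ((Set.Ioo a x).indicator w) MeasureTheory.volume := by
    rwa [MeasureTheory.integrable_indicator_iff measurableSet_Ioo]
  have hvol : Tendsto (fun y => MeasureTheory.volume (Set.Ioo a y)) (nhdsWithin a (Set.Ioi a))
      (nhds 0) := by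
    have h1 : Tendsto (fun y : ℝ => y - a) (nhdsWithin a (Set.Ioi a)) (nhds 0) := by
      have h0 : Continuous (fun y : ℝ => y - a) := continuous_id.sub continuous_const
      have := h0.tendsto a
      simp only [sub_self] at this
      exact this.mono_left nhdsWithin_le_nhds
    have h2 : Tendsto ENNReal.ofReal (nhds 0) (nhds (ENNReal.ofReal 0)) :=
      ENNReal.continuous_ofReal.tendsto 0
    simp only [ENNReal.ofReal_zero] at h2
    have := h2.comp h1
    refine this.congr (fun y => ?_)
    simp [Real.volume_Ioo]
  have := hind.tendsto_setIntegral_nhds_zero (s := fun y => Set.Ioo a y) hvol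
  refine Tendsto.congr' ?_ this
  filter_upwards [Ioo_mem_nhdsGT hax] with y hy
  rw [MeasureTheory.setIntegral_indicator measurableSet_Ioo]
  have hss : Set.Ioo a y ∩ Set.Ioo a x = Set.Ioo a y :=
    Set.inter_eq_left.2 (fun u hu => ⟨hu.1, lt_trans hu.2 hy.2⟩)
  rw [hss]

lemma hasDerivAt_W {w : ℝ → ℝ} (hwcont : ContinuousOn w (stInt a b))
    (hwint : ∀ x ∈ stInt a b, MeasureTheory.IntegrableOn w (Set.Ioo a x) MeasureTheory.volume)
    {x : ℝ} (hx : x ∈ stInt a b) :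
    HasDerivAt (fun t => ∫ u in Set.Ioo a t, w u) (w x) x := by
  set z := (a + x) / 2 with hz
  have hzS : z ∈ stInt a b := mid_mem_stInt hx
  have haz : a < z := hzS.1
  have hzx : z < x := by have := hx.1; rw [hz]; linarith
  have hFTC : HasDerivAt (fun t => (∫ u in Set.Ioo a z, w u) + ∫ u in z..t, w u) (w x) x := by
    apply HasDerivAt.const_add
    apply intervalIntegral.integral_hasDerivAt_right
    · exact (hwcont.mono (uIcc_subset_stInt hzS hx)).intervalIntegrable
    · exact hwcont.stronglyMeasurableAtFilter isOpen_stInt x hx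
    · exact hwcont.continuousAt (isOpen_stInt.mem_nhds hx)
  apply hFTC.congr_of_eventuallyEq
  have hmem : (stInt a b ∩ Set.Ioi z) ∈ nhds x :=
    (isOpen_stInt.inter isOpen_Ioi).mem_nhds ⟨hx, hzx⟩
  filter_upwards [hmem] with t ht
  exact intOn_split haz (le_of_lt ht.2) (hwint t ht.1)

lemma Mab_pos' {m : ℝ → ℝ} (hmcont : ContinuousOn m (stInt a b))
    (hmpos : ∀ x ∈ stInt a b, 0 < m x)
    (hmint : ∀ x ∈ stInt a b, MeasureTheory.IntegrableOn m (Set.Ioo a x) MeasureTheory.volume)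
    {x : ℝ} (hx : x ∈ stInt a b) : 0 < ∫ u in Set.Ioo a x, m u := by
  set z := (a + x) / 2 with hz
  have hzS : z ∈ stInt a b := mid_mem_stInt hx
  have haz : a < z := hzS.1
  have hzx : z < x := by have := hx.1; rw [hz]; linarith
  rw [intOn_split haz hzx.le (hmint x hx)]
  have h1 : 0 ≤ ∫ u in Set.Ioo a z, m u := by
    apply MeasureTheory.setIntegral_nonneg measurableSet_Ioo
    intro u hu
    exact (hmpos u ⟨hu.1, lt_trans (EReal.coe_lt_coe_iff.2 hu.2) hzS.2⟩).le
  have h2 : 0 < ∫ u in z..x, m u := by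
    apply intervalIntegral.intervalIntegral_pos_of_pos_on
    · exact (hmcont.mono (uIcc_subset_stInt hzS hx)).intervalIntegrable
    · intro u hu
      exact hmpos u ⟨lt_trans haz hu.1, lt_trans (EReal.coe_lt_coe_iff.2 hu.2) hx.2⟩
    · exact hzx
  linarith

lemma intOn_mul_bound {m v : ℝ → ℝ} {x K : ℝ}
    (hvm : ContinuousOn (fun u => v u * m u) (Set.Ioo a x))
    (hmint : MeasureTheory.IntegrableOn m (Set.Ioo a x) MeasureTheory.volume)
    (hmpos : ∀ u ∈ Set.Ioo a x, 0 < m u)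
    (hbd : ∀ u ∈ Set.Ioo a x, |v u| ≤ K) :
    MeasureTheory.IntegrableOn (fun u => v u * m u) (Set.Ioo a x) MeasureTheory.volume := by
  apply MeasureTheory.Integrable.mono' (hmint.const_mul K)
  · exact hvm.aestronglyMeasurable measurableSet_Ioo
  · refine (MeasureTheory.ae_restrict_iff' measurableSet_Ioo).2
      (Filter.Eventually.of_forall fun u hu => ?_)
    have h1 : |v u * m u| = |v u| * m u := by
      rw [abs_mul, abs_of_pos (hmpos u hu)]
    rw [Real.norm_eq_abs, h1]
    exact mul_le_mul_of_nonneg_right (hbd u hu) (hmpos u hu).le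

lemma intOn_mul_split {m v : ℝ → ℝ} {x z K : ℝ}
    (hmcont : ContinuousOn m (stInt a b)) (hvcont : ContinuousOn v (stInt a b))
    (hmint : ∀ t ∈ stInt a b, MeasureTheory.IntegrableOn m (Set.Ioo a t) MeasureTheory.volume)
    (hmpos : ∀ t ∈ stInt a b, 0 < m t)
    (hx : x ∈ stInt a b) (hzS : z ∈ stInt a b) (hzx : z < x)
    (hbd : ∀ u ∈ Set.Ioo a z, |v u| ≤ K) :
    MeasureTheory.IntegrableOn (fun u => v u * m u) (Set.Ioo a x) MeasureTheory.volume := by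
  have hIoosub : Set.Ioo a z ⊆ stInt a b := Ioo_subset_stInt hzS
  have h1 : MeasureTheory.IntegrableOn (fun u => v u * m u) (Set.Ioo a z)
      MeasureTheory.volume :=
    intOn_mul_bound ((hvcont.mono hIoosub).mul (hmcont.mono hIoosub))
      (hmint z hzS) (fun u hu => hmpos u (hIoosub hu)) hbd
  have h2 : MeasureTheory.IntegrableOn (fun u => v u * m u) (Set.Ico z x)
      MeasureTheory.volume := by
    have hIcc : Set.Icc z x ⊆ stInt a b := by
      have := uIcc_subset_stInt hzS hx
      rwa [Set.uIcc_of_le hzx.le] at this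
    have hco : ContinuousOn (fun u => v u * m u) (Set.Icc z x) :=
      (hvcont.mono hIcc).mul (hmcont.mono hIcc)
    exact (hco.integrableOn_Icc).mono_set Set.Ico_subset_Icc_self
  have hunion : Set.Ioo a z ∪ Set.Ico z x = Set.Ioo a x :=
    Set.Ioo_union_Ico_eq_Ioo hzS.1 hzx.le
  rw [← hunion]
  exact h1.union h2

lemma ode_alg (σx sx μx cx Mx Cx hy γ : ℝ) (hσ : σx ^ 2 ≠ 0) (hs : sx ≠ 0) :
    σx ^ 2 / 2 * (hy * (2 / (σx ^ 2 * sx) * sx + Mx * (-(2 * μx / σx ^ 2) * sx)) -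
        γ * ((cx * (2 / (σx ^ 2 * sx))) * sx + Cx * (-(2 * μx / σx ^ 2) * sx))) +
      μx * (hy * (Mx * sx) - γ * (Cx * sx)) + γ * cx - hy = 0 := by
  have hσ1 : σx ≠ 0 := fun h => hσ (by simp [h])
  field_simp
  ring

end Aux
theorem statement18    (a : ℝ) (b : EReal) (hab : (a : EReal) < b)
    (μ σ : ℝ → ℝ) (x₀ : ℝ) (hx₀ : x₀ ∈ stInt a b)
    (hμcont : ContinuousOn μ (stInt a b)) (hσcont : ContinuousOn σ (stInt a b))
    (hσpos : ∀ x ∈ stInt a b, 0 < (σ x) ^ 2)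
    (hMfin : ∀ x ∈ stInt a b, IntegrableOn (mDen μ σ x₀) (Set.Ioo a x))
    (hsa : Tendsto (sDen μ σ x₀) (𝓝[>] a) atTop)
    (hsMb : Tendsto (fun x => sDen μ σ x₀ x * Mab μ σ x₀ a x) (atB b) atTop)
    (hbnat : Tendsto (xiF μ σ x₀ a) (atB b) atTop)
    (μa : ℝ) (hμa : Tendsto μ (𝓝[>] a) (𝓝 μa))
    (c : ℝ → ℝ) (hccont : ContinuousOn c (stInt a b))
    (hcnn : ∀ x ∈ stInt a b, 0 ≤ c x) (hcmono : MonotoneOn c (stInt a b))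
    (ca cb : ℝ) (hca : Tendsto c (𝓝[>] a) (𝓝 ca)) (hcb : Tendsto c (atB b) (𝓝 cb))
    (hca0 : 0 ≤ ca) (hcacb : ca < cb)
    (xhat0 : ℝ) (hxhat0 : xhat0 ∈ stInt a b)
    (hμmono : StrictMonoOn μ (Set.Ioo a xhat0))
    (hμconc : ConcaveOn ℝ {x : ℝ | xhat0 < x ∧ (x : EReal) < b} μ)
    (hcconc : ConcaveOn ℝ {x : ℝ | xhat0 < x ∧ (x : EReal) < b} c)
    (p γ : ℝ) (hp : 0 < p) (hγ : 0 < γ)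
    (hint : ∃ xt ∈ stInt a b, γ * cbar μ σ c x₀ a b cb < hF μ σ c x₀ a p γ xt)
    (yh : ℝ) (hyh : yh ∈ stInt a b)
    (hymax : ∀ x ∈ stInt a b, x ≠ yh → hF μ σ c x₀ a p γ x < hF μ σ c x₀ a p γ yh)
    (U : ℝ → ℝ)
    (hU : ∀ x, U x =
      if x ≤ yh then hF μ σ c x₀ a p γ yh * xiF μ σ x₀ a x - γ * gF μ σ c x₀ a x
      else (hF μ σ c x₀ a p γ yh * xiF μ σ x₀ a yh - γ * gF μ σ c x₀ a yh) + p * (x - yh)) :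
    ContDiffOn ℝ 2 U (stInt a b) ∧
    (∀ x ∈ stInt a b,
      max ((σ x) ^ 2 / 2 * deriv (deriv U) x + μ x * deriv U x + γ * c x -
          hF μ σ c x₀ a p γ yh) (-(deriv U x) + p) = 0) ∧
    (∀ x : ℝ, a < x → x < yh →
      (σ x) ^ 2 / 2 * deriv (deriv U) x + μ x * deriv U x + γ * c x -
        hF μ σ c x₀ a p γ yh = 0 ∧ p ≤ deriv U x) ∧
    (∀ x : ℝ, yh < x → (x : EReal) < b →
      deriv U x = p ∧
      (σ x) ^ 2 / 2 * deriv (deriv U) x + μ x * deriv U x + γ * c x -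
        hF μ σ c x₀ a p γ yh < 0) := by
  classical
  have hSopen : IsOpen (stInt a b) := isOpen_stInt
  have hyhS : yh ∈ stInt a b := hyh
  have hayh : a < yh := hyhS.1
  have hmcont : ContinuousOn (mDen μ σ x₀) (stInt a b) := contOn_mDen hμcont hσcont hσpos hx₀
  have hscont : ContinuousOn (sDen μ σ x₀) (stInt a b) := contOn_sDen hμcont hσcont hσpos hx₀
  have hmpos : ∀ x ∈ stInt a b, 0 < mDen μ σ x₀ x := fun x hx => mDen_pos hσpos hx
  have hsne : ∀ x : ℝ, sDen μ σ x₀ x ≠ 0 := fun x => (sDen_pos x).ne'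
  have hM_dv : ∀ x ∈ stInt a b, HasDerivAt (Mab μ σ x₀ a) (mDen μ σ x₀ x) x :=
    fun x hx => hasDerivAt_W hmcont hMfin hx
  have hMcont : ContinuousOn (Mab μ σ x₀ a) (stInt a b) :=
    fun x hx => (hM_dv x hx).continuousAt.continuousWithinAt
  have hMpos : ∀ x ∈ stInt a b, 0 < Mab μ σ x₀ a x :=
    fun x hx => Mab_pos' hmcont hmpos hMfin hx
  set C : ℝ → ℝ := fun t => ∫ u in Set.Ioo a t, c u * mDen μ σ x₀ u with hC_def
  set N : ℝ → ℝ := fun t => ∫ u in Set.Ioo a t, (γ * c u + p * μ u) * mDen μ σ x₀ u with hN_def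
  have hcmcont : ContinuousOn (fun u => c u * mDen μ σ x₀ u) (stInt a b) := hccont.mul hmcont
  have hcm_int : ∀ x ∈ stInt a b,
      IntegrableOn (fun u => c u * mDen μ σ x₀ u) (Set.Ioo a x) volume := by
    intro x hx
    apply intOn_mul_bound (hcmcont.mono (Ioo_subset_stInt hx)) (hMfin x hx)
      (fun u hu => hmpos u (Ioo_subset_stInt hx hu))
    intro u hu
    have huS := Ioo_subset_stInt hx hu
    rw [abs_of_nonneg (hcnn u huS)]
    exact hcmono huS hx hu.2.le
  have hμm_int : ∀ x ∈ stInt a b,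
      IntegrableOn (fun u => μ u * mDen μ σ x₀ u) (Set.Ioo a x) volume := by
    intro x hx
    have hax : a < x := hx.1
    have haxh : a < xhat0 := hxhat0.1
    set z := (a + min x xhat0) / 2 with hz_def
    have hamin : a < min x xhat0 := lt_min hax haxh
    have hzlt : z < min x xhat0 := by rw [hz_def]; linarith
    have haz : a < z := by rw [hz_def]; linarith
    have hzx : z < x := lt_of_lt_of_le hzlt (min_le_left _ _)
    have hzxh : z < xhat0 := lt_of_lt_of_le hzlt (min_le_right _ _)
    have hzS : z ∈ stInt a b :=
      ⟨haz, lt_trans (EReal.coe_lt_coe_iff.2 hzx) hx.2⟩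
    apply intOn_mul_split hmcont hμcont hMfin hmpos hx hzS hzx (K := max |μa| |μ z|)
    intro u hu
    have hu1 : u ∈ Set.Ioo a xhat0 := ⟨hu.1, lt_trans hu.2 hzxh⟩
    have hzIoo : z ∈ Set.Ioo a xhat0 := ⟨haz, hzxh⟩
    have hup : μ u ≤ μ z := (hμmono hu1 hzIoo hu.2).le
    have hlo : μa ≤ μ u := by
      apply le_of_tendsto hμa
      filter_upwards [Ioo_mem_nhdsGT hu.1] with t ht
      exact (hμmono ⟨ht.1, lt_trans ht.2 hu1.2⟩ hu1 ht.2).le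
    rw [abs_le]
    constructor
    · have h1 := neg_abs_le μa
      have h2 := le_max_left |μa| |μ z|
      linarith
    · have h1 := le_abs_self (μ z)
      have h2 := le_max_right |μa| |μ z|
      linarith
  have hψmcont : ContinuousOn (fun u => (γ * c u + p * μ u) * mDen μ σ x₀ u) (stInt a b) :=
    ((continuousOn_const.mul hccont).add (continuousOn_const.mul hμcont)).mul hmcont
  have hψm_int : ∀ x ∈ stInt a b,
      IntegrableOn (fun u => (γ * c u + p * μ u) * mDen μ σ x₀ u) (Set.Ioo a x) volume := by
    intro x hx
    have h1 := ((hcm_int x hx).const_mul γ).add ((hμm_int x hx).const_mul p)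
    exact h1.congr (ae_of_all _ (fun u => by simp only [Pi.add_apply]; ring))
  have hC_dv : ∀ x ∈ stInt a b, HasDerivAt C (c x * mDen μ σ x₀ x) x :=
    fun x hx => hasDerivAt_W hcmcont hcm_int hx
  have hN_dv : ∀ x ∈ stInt a b,
      HasDerivAt N ((γ * c x + p * μ x) * mDen μ σ x₀ x) x :=
    fun x hx => hasDerivAt_W hψmcont hψm_int hx
  have hCcont : ContinuousOn C (stInt a b) :=
    fun x hx => (hC_dv x hx).continuousAt.continuousWithinAt
  have hNcont : ContinuousOn N (stInt a b) :=
    fun x hx => (hN_dv x hx).continuousAt.continuousWithinAt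
  -- the key boundary identity ∫_{(a,x)} μ m = (s x)⁻¹
  have hμmcont : ContinuousOn (fun u => μ u * mDen μ σ x₀ u) (stInt a b) := hμcont.mul hmcont
  have hIμ : ∀ x ∈ stInt a b,
      (∫ u in Set.Ioo a x, μ u * mDen μ σ x₀ u) = (sDen μ σ x₀ x)⁻¹ := by
    intro x hx
    have key : ∀ y ∈ Set.Ioo a x, (∫ u in Set.Ioo a y, μ u * mDen μ σ x₀ u) =
        (∫ u in Set.Ioo a x, μ u * mDen μ σ x₀ u) - (sDen μ σ x₀ x)⁻¹ + (sDen μ σ x₀ y)⁻¹ := by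
      intro y hy
      have hyS : y ∈ stInt a b := Ioo_subset_stInt hx hy
      have hsub : ∫ u in y..x, μ u * mDen μ σ x₀ u
          = (sDen μ σ x₀ x)⁻¹ - (sDen μ σ x₀ y)⁻¹ := by
        apply intervalIntegral.integral_eq_sub_of_hasDerivAt
        · intro t ht
          exact hasDerivAt_inv_sDen hμcont hσcont hσpos hx₀ (uIcc_subset_stInt hyS hx ht)
        · exact (hμmcont.mono (uIcc_subset_stInt hyS hx)).intervalIntegrable
      have hsp := intOn_split hy.1 hy.2.le (hμm_int x hx)
      rw [hsub] at hsp
      linarith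
    have h1 : Tendsto (fun y => ∫ u in Set.Ioo a y, μ u * mDen μ σ x₀ u) (𝓝[>] a) (𝓝 0) :=
      tendsto_intOo_zero hx.1 (hμm_int x hx)
    have h2 : Tendsto (fun y => (∫ u in Set.Ioo a x, μ u * mDen μ σ x₀ u) -
        (sDen μ σ x₀ x)⁻¹ + (sDen μ σ x₀ y)⁻¹) (𝓝[>] a)
        (𝓝 ((∫ u in Set.Ioo a x, μ u * mDen μ σ x₀ u) - (sDen μ σ x₀ x)⁻¹ + 0)) :=
      tendsto_const_nhds.add hsa.inv_tendsto_atTop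
    have h3 : Tendsto (fun y => ∫ u in Set.Ioo a y, μ u * mDen μ σ x₀ u) (𝓝[>] a)
        (𝓝 ((∫ u in Set.Ioo a x, μ u * mDen μ σ x₀ u) - (sDen μ σ x₀ x)⁻¹ + 0)) := by
      apply h2.congr'
      filter_upwards [Ioo_mem_nhdsGT hx.1] with y hy
      exact (key y hy).symm
    have := tendsto_nhds_unique h1 h3
    linarith
  have hN_eq : ∀ x ∈ stInt a b, N x = γ * C x + p * (sDen μ σ x₀ x)⁻¹ := by
    intro x hx
    have e1 : N x = ∫ u in Set.Ioo a x,
        (γ * (c u * mDen μ σ x₀ u) + p * (μ u * mDen μ σ x₀ u)) :=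
      setIntegral_congr_fun measurableSet_Ioo (fun u _ => by ring)
    rw [e1, integral_add ((hcm_int x hx).const_mul γ) ((hμm_int x hx).const_mul p),
      integral_const_mul, integral_const_mul, hIμ x hx]
  -- h = N / M and its derivative
  set hy0 := hF μ σ c x₀ a p γ yh with hhy0_def
  have hF_eq : ∀ x : ℝ, hF μ σ c x₀ a p γ x = N x / Mab μ σ x₀ a x := fun x => rfl
  have hhle : ∀ x ∈ stInt a b, hF μ σ c x₀ a p γ x ≤ hy0 := by
    intro x hx
    rcases eq_or_ne x yh with rfl | hne
    · exact le_refl _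
    · exact (hymax x hx hne).le
  set D : ℝ → ℝ := fun t => ((γ * c t + p * μ t) * mDen μ σ x₀ t * Mab μ σ x₀ a t -
      N t * mDen μ σ x₀ t) / (Mab μ σ x₀ a t) ^ 2 with hD_def
  have hh_dv : ∀ x ∈ stInt a b, HasDerivAt (hF μ σ c x₀ a p γ) (D x) x := by
    intro x hx
    exact (hN_dv x hx).div (hM_dv x hx) (hMpos x hx).ne'
  have hDcont : ContinuousOn D (stInt a b) := by
    apply ContinuousOn.div
    · exact (hψmcont.mul hMcont).sub (hNcont.mul hmcont)
    · exact hMcont.pow 2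
    · exact fun x hx => pow_ne_zero 2 (hMpos x hx).ne'
  -- Step A : ψ(yh) = hy0
  have hψyh : γ * c yh + p * μ yh = hy0 := by
    have hloc : IsLocalMax (hF μ σ c x₀ a p γ) yh := by
      filter_upwards [hSopen.mem_nhds hyhS] with t ht
      exact hhle t ht
    have h0 : D yh = 0 := hloc.hasDerivAt_eq_zero (hh_dv yh hyhS)
    rw [hD_def] at h0
    have hMne : Mab μ σ x₀ a yh ≠ 0 := (hMpos yh hyhS).ne'
    have hmne : mDen μ σ x₀ yh ≠ 0 := (hmpos yh hyhS).ne'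
    have h1 : (γ * c yh + p * μ yh) * mDen μ σ x₀ yh * Mab μ σ x₀ a yh -
        N yh * mDen μ σ x₀ yh = 0 := by
      have := (div_eq_zero_iff.1 h0).resolve_right (pow_ne_zero 2 hMne)
      exact this
    have h2 : ((γ * c yh + p * μ yh) * Mab μ σ x₀ a yh - N yh) * mDen μ σ x₀ yh = 0 := by
      linear_combination h1
    have h3 : (γ * c yh + p * μ yh) * Mab μ σ x₀ a yh - N yh = 0 :=
      (mul_eq_zero.1 h2).resolve_right hmne
    rw [hhy0_def, hF_eq]
    field_simp
    linarith
  -- a helper for producing the contradiction with the maximality of yh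
  have hcontra : ∀ x1 ∈ stInt a b, yh < x1 →
      (∀ t ∈ Set.Ioo yh x1, hy0 ≤ γ * c t + p * μ t) → False := by
    intro x1 hx1S hyx1 hge
    have hne : x1 ≠ yh := (ne_of_gt hyx1)
    have hsub : Set.uIcc yh x1 ⊆ stInt a b := uIcc_subset_stInt hyhS hx1S
    have hFTC : ∫ t in yh..x1, D t =
        hF μ σ c x₀ a p γ x1 - hF μ σ c x₀ a p γ yh := by
      apply intervalIntegral.integral_eq_sub_of_hasDerivAt
      · exact fun t ht => hh_dv t (hsub ht)
      · exact (hDcont.mono hsub).intervalIntegrable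
    have hpos : 0 < ∫ t in yh..x1, D t := by
      apply intervalIntegral.intervalIntegral_pos_of_pos_on
        ((hDcont.mono hsub).intervalIntegrable)
      · intro t ht
        have htS : t ∈ stInt a b :=
          ⟨lt_trans hayh ht.1, lt_trans (EReal.coe_lt_coe_iff.2 ht.2) hx1S.2⟩
        have hMt := hMpos t htS
        have hmt := hmpos t htS
        have hht : hF μ σ c x₀ a p γ t < hy0 := hymax t htS (ne_of_gt ht.1)
        have hNlt : N t < (γ * c t + p * μ t) * Mab μ σ x₀ a t := by
          have h5 : N t / Mab μ σ x₀ a t < hy0 := by rw [← hF_eq]; exact hht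
          have h6 : N t / Mab μ σ x₀ a t < γ * c t + p * μ t :=
            lt_of_lt_of_le h5 (hge t ht)
          exact (div_lt_iff₀ hMt).1 h6
        rw [hD_def]
        apply div_pos _ (pow_pos hMt 2)
        nlinarith
      · exact hyx1
    rw [hFTC] at hpos
    have := hymax x1 hx1S hne
    linarith
  -- Step B : xhat0 ≤ yh
  have hxhat_le : xhat0 ≤ yh := by
    by_contra hlt
    push_neg at hlt
    set x1 := (yh + xhat0) / 2 with hx1_def
    have hyx1 : yh < x1 := by rw [hx1_def]; linarith
    have hx1h : x1 < xhat0 := by rw [hx1_def]; linarith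
    have hx1S : x1 ∈ stInt a b :=
      ⟨lt_trans hayh hyx1, lt_trans (EReal.coe_lt_coe_iff.2 hx1h) hxhat0.2⟩
    apply hcontra x1 hx1S hyx1
    intro t ht
    have htS : t ∈ stInt a b :=
      ⟨lt_trans hayh ht.1, lt_trans (EReal.coe_lt_coe_iff.2 ht.2) hx1S.2⟩
    have hμlt : μ yh < μ t :=
      hμmono ⟨hayh, hlt⟩ ⟨htS.1, lt_trans ht.2 hx1h⟩ ht.1
    have hcle : c yh ≤ c t := hcmono hyhS htS ht.1.le
    rw [← hψyh]
    nlinarith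
  -- Step C : ψ(x) < hy0 for x > yh
  have hψlt : ∀ x ∈ stInt a b, yh < x → γ * c x + p * μ x < hy0 := by
    intro x1 hx1S hyx1
    by_contra hge0
    push_neg at hge0
    apply hcontra x1 hx1S hyx1
    intro t ht
    -- use concavity of ψ on (xhat0, b)
    set lam := fun y' : ℝ => (x1 - t) / (x1 - y') with hlam_def
    have hx1D : x1 ∈ {x : ℝ | xhat0 < x ∧ (x : EReal) < b} :=
      ⟨lt_of_le_of_lt hxhat_le hyx1, hx1S.2⟩
    have htb : (t : EReal) < b := lt_trans (EReal.coe_lt_coe_iff.2 ht.2) hx1S.2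
    have hψconc : ConcaveOn ℝ {x : ℝ | xhat0 < x ∧ (x : EReal) < b}
        (fun x => γ * c x + p * μ x) := by
      exact (hcconc.smul hγ.le).add (hμconc.smul hp.le)
    have hev : ∀ᶠ y' in 𝓝[>] yh,
        lam y' * (γ * c y' + p * μ y') + (1 - lam y') * (γ * c x1 + p * μ x1) ≤
          γ * c t + p * μ t := by
      filter_upwards [Ioo_mem_nhdsGT ht.1] with y' hy'
      have hy'D : y' ∈ {x : ℝ | xhat0 < x ∧ (x : EReal) < b} :=
        ⟨lt_of_le_of_lt hxhat_le hy'.1, lt_trans (EReal.coe_lt_coe_iff.2 (lt_trans hy'.2 ht.2)) hx1S.2⟩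
      have hy't : y' < t := hy'.2
      have hy'x1 : y' < x1 := lt_trans hy't ht.2
      have hlam0 : 0 ≤ lam y' := by
        rw [hlam_def]
        apply div_nonneg (by linarith [ht.2]) (by linarith)
      have hlam1 : 0 ≤ 1 - lam y' := by
        rw [hlam_def]
        have h7 : (x1 - t) / (x1 - y') ≤ 1 := by
          rw [div_le_one (by linarith)]
          linarith
        linarith
      have hsum : lam y' + (1 - lam y') = 1 := by ring
      have hcomb := hψconc.2 hy'D hx1D hlam0 hlam1 hsum
      have h9 : x1 - y' ≠ 0 := by intro h0; rw [sub_eq_zero] at h0; linarith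
      have harg : lam y' • y' + (1 - lam y') • x1 = t := by
        rw [smul_eq_mul, smul_eq_mul, hlam_def]
        field_simp
        ring
      rw [harg] at hcomb
      simpa [smul_eq_mul] using hcomb
    have hlim : Tendsto (fun y' => lam y' * (γ * c y' + p * μ y') +
        (1 - lam y') * (γ * c x1 + p * μ x1)) (𝓝[>] yh)
        (𝓝 ((x1 - t) / (x1 - yh) * (γ * c yh + p * μ yh) +
          (1 - (x1 - t) / (x1 - yh)) * (γ * c x1 + p * μ x1))) := by
      have hccont' : ContinuousAt c yh := hccont.continuousAt (hSopen.mem_nhds hyhS)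
      have hμcont' : ContinuousAt μ yh := hμcont.continuousAt (hSopen.mem_nhds hyhS)
      have hxyne : x1 - yh ≠ 0 := by intro h0; rw [sub_eq_zero] at h0; linarith
      have hlamc : Tendsto lam (𝓝[>] yh) (𝓝 ((x1 - t) / (x1 - yh))) := by
        have hcont : Tendsto (fun y' : ℝ => (x1 - t) / (x1 - y')) (𝓝 yh)
            (𝓝 ((x1 - t) / (x1 - yh))) :=
          tendsto_const_nhds.div (tendsto_const_nhds.sub tendsto_id) hxyne
        rw [hlam_def]
        exact hcont.mono_left nhdsWithin_le_nhds
      have T1 : Tendsto (fun y' => γ * c y' + p * μ y') (𝓝[>] yh)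
          (𝓝 (γ * c yh + p * μ yh)) :=
        ((tendsto_const_nhds.mul hccont').add
          (tendsto_const_nhds.mul hμcont')).mono_left nhdsWithin_le_nhds
      exact (hlamc.mul T1).add ((tendsto_const_nhds.sub hlamc).mul tendsto_const_nhds)
    have hfinal := le_of_tendsto hlim hev
    have hco : 0 ≤ (x1 - t) / (x1 - yh) := by
      apply div_nonneg (by linarith [ht.2]) (by linarith [ht.1])
    have hco2 : (x1 - t) / (x1 - yh) ≤ 1 := by
      rw [div_le_one (by linarith [ht.1])]
      linarith [ht.1]
    nlinarith [hψyh, hge0, hfinal]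
  -- derivatives of ξ and g
  have hs_dv : ∀ x ∈ stInt a b,
      HasDerivAt (sDen μ σ x₀) (-(2 * μ x / (σ x) ^ 2) * sDen μ σ x₀ x) x :=
    fun x hx => hasDerivAt_sDen hμcont hσcont hσpos hx₀ hx
  have hMscont : ContinuousOn (fun v => Mab μ σ x₀ a v * sDen μ σ x₀ v) (stInt a b) :=
    hMcont.mul hscont
  have hCscont : ContinuousOn (fun v => C v * sDen μ σ x₀ v) (stInt a b) := hCcont.mul hscont
  have hxi_dv : ∀ x ∈ stInt a b,
      HasDerivAt (xiF μ σ x₀ a) (Mab μ σ x₀ a x * sDen μ σ x₀ x) x := by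
    intro x hx
    exact intervalIntegral.integral_hasDerivAt_right
      ((hMscont.mono (uIcc_subset_stInt hx₀ hx)).intervalIntegrable)
      (hMscont.stronglyMeasurableAtFilter hSopen x hx)
      (hMscont.continuousAt (hSopen.mem_nhds hx))
  have hg_dv : ∀ x ∈ stInt a b,
      HasDerivAt (gF μ σ c x₀ a) (C x * sDen μ σ x₀ x) x := by
    intro x hx
    exact intervalIntegral.integral_hasDerivAt_right
      ((hCscont.mono (uIcc_subset_stInt hx₀ hx)).intervalIntegrable)
      (hCscont.stronglyMeasurableAtFilter hSopen x hx)
      (hCscont.continuousAt (hSopen.mem_nhds hx))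
  set V : ℝ → ℝ := fun t => hy0 * xiF μ σ x₀ a t - γ * gF μ σ c x₀ a t with hV_def
  set V1 : ℝ → ℝ := fun t => hy0 * (Mab μ σ x₀ a t * sDen μ σ x₀ t) -
      γ * (C t * sDen μ σ x₀ t) with hV1_def
  set V2 : ℝ → ℝ := fun t => hy0 * (mDen μ σ x₀ t * sDen μ σ x₀ t +
      Mab μ σ x₀ a t * (-(2 * μ t / σ t ^ 2) * sDen μ σ x₀ t)) -
      γ * ((c t * mDen μ σ x₀ t) * sDen μ σ x₀ t +
        C t * (-(2 * μ t / σ t ^ 2) * sDen μ σ x₀ t)) with hV2_def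
  have hV_dv : ∀ x ∈ stInt a b, HasDerivAt V (V1 x) x := fun x hx =>
    ((hxi_dv x hx).const_mul hy0).sub ((hg_dv x hx).const_mul γ)
  have hV1_dv : ∀ x ∈ stInt a b, HasDerivAt V1 (V2 x) x := fun x hx =>
    (((hM_dv x hx).mul (hs_dv x hx)).const_mul hy0).sub
      (((hC_dv x hx).mul (hs_dv x hx)).const_mul γ)
  have hV2cont : ContinuousOn V2 (stInt a b) := by
    have hfcont : ContinuousOn (fun t => -(2 * μ t / σ t ^ 2) * sDen μ σ x₀ t) (stInt a b) :=
      ((contOn_fQ hμcont hσcont hσpos).neg).mul hscont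
    exact (continuousOn_const.mul ((hmcont.mul hscont).add (hMcont.mul hfcont))).sub
      (continuousOn_const.mul (((hccont.mul hmcont).mul hscont).add (hCcont.mul hfcont)))
  have hODE : ∀ x ∈ stInt a b, σ x ^ 2 / 2 * V2 x + μ x * V1 x + γ * c x - hy0 = 0 := by
    intro x hx
    have hmx : mDen μ σ x₀ x = 2 / (σ x ^ 2 * sDen μ σ x₀ x) := rfl
    simp only [hV2_def, hV1_def]
    rw [hmx]
    exact ode_alg (σ x) (sDen μ σ x₀ x) (μ x) (c x) (Mab μ σ x₀ a x) (C x) hy0 γ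
      (hσpos x hx).ne' (hsne x)
  have hV1_eq : ∀ x ∈ stInt a b, V1 x =
      sDen μ σ x₀ x * Mab μ σ x₀ a x * (hy0 - hF μ σ c x₀ a p γ x) + p := by
    intro x hx
    have hMne : Mab μ σ x₀ a x ≠ 0 := (hMpos x hx).ne'
    have hsnex := hsne x
    simp only [hV1_def]
    rw [hF_eq, hN_eq x hx]
    field_simp
    ring
  have hV1_ge : ∀ x ∈ stInt a b, p ≤ V1 x := by
    intro x hx
    rw [hV1_eq x hx]
    have h1 : 0 ≤ sDen μ σ x₀ x * Mab μ σ x₀ a x * (hy0 - hF μ σ c x₀ a p γ x) :=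
      mul_nonneg (mul_nonneg (sDen_pos x).le (hMpos x hx).le) (by linarith [hhle x hx])
    linarith
  have hV1yh : V1 yh = p := by
    rw [hV1_eq yh hyhS, ← hhy0_def]
    ring
  have hV2yh : V2 yh = 0 := by
    have h0 := hODE yh hyhS
    rw [hV1yh] at h0
    have h1 : σ yh ^ 2 / 2 * V2 yh = 0 := by linarith [hψyh]
    have h2 : σ yh ^ 2 / 2 ≠ 0 := by
      have := hσpos yh hyhS
      positivity
    exact (mul_eq_zero.1 h1).resolve_left h2
  -- structure of U
  have hUV : ∀ x, x ≤ yh → U x = V x := by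
    intro x hx
    rw [hU x, if_pos hx]
  have hUL : ∀ x, yh < x → U x = V yh + p * (x - yh) := by
    intro x hx
    rw [hU x, if_neg (not_le.2 hx)]
  set U1 : ℝ → ℝ := fun t => if t ≤ yh then V1 t else p with hU1_def
  set U2 : ℝ → ℝ := fun t => if t ≤ yh then V2 t else 0 with hU2_def
  have hU1yh : U1 yh = p := by simp only [hU1_def, if_pos le_rfl, hV1yh]
  have hU2yh : U2 yh = 0 := by simp only [hU2_def, if_pos le_rfl, hV2yh]
  have hline_dv : ∀ x : ℝ, HasDerivAt (fun t => V yh + p * (t - yh)) p x := by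
    intro x
    have h1 := (((hasDerivAt_id x).sub_const yh).const_mul p).const_add (V yh)
    simpa using h1
  have hU_dv : ∀ x ∈ stInt a b, HasDerivAt U (U1 x) x := by
    intro x hx
    rcases lt_trichotomy x yh with hlt | heqx | hgt
    · have heq : U =ᶠ[nhds x] V := by
        filter_upwards [Iio_mem_nhds hlt] with t ht
        exact hUV t (le_of_lt ht)
      have h1 := (hV_dv x hx).congr_of_eventuallyEq heq
      simp only [hU1_def, if_pos hlt.le]
      exact h1
    · rw [heqx]
      have hL : HasDerivWithinAt U p (Set.Iic yh) yh := by
        have h2 := ((hV_dv yh hyhS).hasDerivWithinAt (s := Set.Iic yh)).congr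
          (fun t ht => hUV t ht) (hUV yh le_rfl)
        rwa [hV1yh] at h2
      have hR : HasDerivWithinAt U p (Set.Ici yh) yh := by
        apply ((hline_dv yh).hasDerivWithinAt (s := Set.Ici yh)).congr
        · intro t ht
          rcases eq_or_lt_of_le (Set.mem_Ici.1 ht) with h | h
          · rw [← h, hUV yh le_rfl]; ring
          · rw [hUL t h]
        · rw [hUV yh le_rfl]; ring
      have h3 := hL.union hR
      rw [Set.Iic_union_Ici] at h3
      have h4 := hasDerivWithinAt_univ.1 h3
      rwa [hU1yh]
    · have heq : U =ᶠ[nhds x] fun t => V yh + p * (t - yh) := by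
        filter_upwards [Ioi_mem_nhds hgt] with t ht
        exact hUL t ht
      have h1 := (hline_dv x).congr_of_eventuallyEq heq
      simp only [hU1_def, if_neg (not_le.2 hgt)]
      exact h1
  have hU1_dv : ∀ x ∈ stInt a b, HasDerivAt U1 (U2 x) x := by
    intro x hx
    rcases lt_trichotomy x yh with hlt | heqx | hgt
    · have heq : U1 =ᶠ[nhds x] V1 := by
        filter_upwards [Iio_mem_nhds hlt] with t ht
        simp only [hU1_def]
        rw [if_pos (le_of_lt (Set.mem_Iio.1 ht))]
      have h1 := (hV1_dv x hx).congr_of_eventuallyEq heq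
      simp only [hU2_def, if_pos hlt.le]
      exact h1
    · rw [heqx]
      have hL : HasDerivWithinAt U1 0 (Set.Iic yh) yh := by
        have h2 : HasDerivWithinAt U1 (V2 yh) (Set.Iic yh) yh := by
          apply ((hV1_dv yh hyhS).hasDerivWithinAt (s := Set.Iic yh)).congr
          · intro t ht
            simp only [hU1_def]
            exact if_pos (ht : t ≤ yh)
          · simp only [hU1_def]
            exact if_pos le_rfl
        rwa [hV2yh] at h2
      have hR : HasDerivWithinAt U1 0 (Set.Ici yh) yh := by
        apply ((hasDerivAt_const yh p).hasDerivWithinAt (s := Set.Ici yh)).congr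
        · intro t ht
          rcases eq_or_lt_of_le (Set.mem_Ici.1 ht) with h | h
          · rw [← h, hU1yh]
          · simp only [hU1_def, if_neg (not_le.2 h)]
        · rw [hU1yh]
      have h3 := hL.union hR
      rw [Set.Iic_union_Ici] at h3
      have h4 := hasDerivWithinAt_univ.1 h3
      rwa [hU2yh]
    · have heq : U1 =ᶠ[nhds x] fun _ => p := by
        filter_upwards [Ioi_mem_nhds hgt] with t ht
        simp only [hU1_def, if_neg (not_le.2 (Set.mem_Ioi.1 ht))]
      have h1 := (hasDerivAt_const x p).congr_of_eventuallyEq heq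
      simp only [hU2_def, if_neg (not_le.2 hgt)]
      exact h1
  have hU2cont : ContinuousOn U2 (stInt a b) := by
    intro x hx
    rcases lt_trichotomy x yh with hlt | heqx | hgt
    · have heq : U2 =ᶠ[nhds x] V2 := by
        filter_upwards [Iio_mem_nhds hlt] with t ht
        simp only [hU2_def]
        rw [if_pos (le_of_lt (Set.mem_Iio.1 ht))]
      exact (((hV2cont x hx).continuousAt (hSopen.mem_nhds hx)).congr heq.symm).continuousWithinAt
    · rw [heqx]
      have habs : Tendsto (fun t => |V2 t|) (nhdsWithin yh (stInt a b)) (nhds 0) := by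
        have h5 : Tendsto (fun t => |V2 t|) (nhdsWithin yh (stInt a b)) (nhds |V2 yh|) :=
          (hV2cont yh hyhS).abs
        rwa [hV2yh, abs_zero] at h5
      have hsq : Tendsto U2 (nhdsWithin yh (stInt a b)) (nhds 0) := by
        rw [tendsto_zero_iff_abs_tendsto_zero]
        apply squeeze_zero (fun t => abs_nonneg _) _ habs
        intro t
        rcases le_or_gt t yh with h | h
        · simp only [hU2_def, if_pos h]; exact le_rfl
        · simp only [hU2_def, if_neg (not_le.2 h), abs_zero]; exact abs_nonneg _
      have : ContinuousWithinAt U2 (stInt a b) yh := by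
        rw [ContinuousWithinAt, hU2yh]
        exact hsq
      exact this
    · have heq : U2 =ᶠ[nhds x] fun _ => (0 : ℝ) := by
        filter_upwards [Ioi_mem_nhds hgt] with t ht
        simp only [hU2_def, if_neg (not_le.2 (Set.mem_Ioi.1 ht))]
      exact ((continuousAt_const.congr heq.symm)).continuousWithinAt
  -- assembling everything
  have hUdiff : DifferentiableOn ℝ U (stInt a b) :=
    fun x hx => ((hU_dv x hx).differentiableAt).differentiableWithinAt
  have hU1diff : DifferentiableOn ℝ U1 (stInt a b) :=
    fun x hx => ((hU1_dv x hx).differentiableAt).differentiableWithinAt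
  have hdU_eq : ∀ x ∈ stInt a b, deriv U x = U1 x := fun x hx => (hU_dv x hx).deriv
  have hdU1_eq : ∀ x ∈ stInt a b, deriv U1 x = U2 x := fun x hx => (hU1_dv x hx).deriv
  have hddU_eq : ∀ x ∈ stInt a b, deriv (deriv U) x = U2 x := by
    intro x hx
    have heq : deriv U =ᶠ[nhds x] U1 := by
      filter_upwards [hSopen.mem_nhds hx] with t ht
      exact hdU_eq t ht
    rw [heq.deriv_eq]
    exact hdU1_eq x hx
  have hC2 : ContDiffOn ℝ 2 U (stInt a b) := by
    rw [show (2 : WithTop ℕ∞) = 1 + 1 from rfl, contDiffOn_succ_iff_deriv_of_isOpen hSopen]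
    refine ⟨hUdiff, by simp, ?_⟩
    apply ContDiffOn.congr _ (fun x hx => hdU_eq x hx)
    rw [show (1 : WithTop ℕ∞) = 0 + 1 from rfl, contDiffOn_succ_iff_deriv_of_isOpen hSopen]
    refine ⟨hU1diff, by simp, ?_⟩
    apply ContDiffOn.congr _ (fun x hx => hdU1_eq x hx)
    exact contDiffOn_zero.2 hU2cont
  refine ⟨hC2, ?_, ?_, ?_⟩
  · intro x hx
    rw [hddU_eq x hx, hdU_eq x hx]
    rcases le_or_gt x yh with hle | hgt
    · have e1 : U1 x = V1 x := if_pos hle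
      have e2 : U2 x = V2 x := if_pos hle
      rw [e1, e2]
      have hA := hODE x hx
      rw [hA]
      have hB : -(V1 x) + p ≤ 0 := by
        have := hV1_ge x hx
        linarith
      exact max_eq_left hB
    · have e1 : U1 x = p := if_neg (not_le.2 hgt)
      have e2 : U2 x = 0 := if_neg (not_le.2 hgt)
      rw [e1, e2, mul_zero]
      have hA : 0 + μ x * p + γ * c x - hy0 < 0 := by
        have := hψlt x hx hgt
        linarith
      have hA' : 0 + μ x * p + γ * c x - hy0 ≤ -p + p := by linarith
      rw [max_eq_right hA']
      ring
  · intro x hax hxy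
    have hx : x ∈ stInt a b := ⟨hax, lt_trans (EReal.coe_lt_coe_iff.2 hxy) hyhS.2⟩
    have e1 : U1 x = V1 x := if_pos hxy.le
    have e2 : U2 x = V2 x := if_pos hxy.le
    constructor
    · rw [hddU_eq x hx, hdU_eq x hx, e1, e2]
      exact hODE x hx
    · rw [hdU_eq x hx, e1]
      exact hV1_ge x hx
  · intro x hyx hxb
    have hx : x ∈ stInt a b := ⟨lt_trans hayh hyx, hxb⟩
    have e1 : U1 x = p := if_neg (not_le.2 hyx)
    have e2 : U2 x = 0 := if_neg (not_le.2 hyx)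
    constructor
    · rw [hdU_eq x hx, e1]
    · rw [hddU_eq x hx, hdU_eq x hx, e1, e2, mul_zero]
      have := hψlt x hx hyx
      linarith
end
end

section
/- Suppose lim_{x→a⁺} s(x) = ∞, the right boundary b is natural (lim_{x→b} s(x)·M[a,x] = ∞ and ∫_{x₀}^{b} M[x₀,v] s(v) dv = ∞), μ extends continuously to x = a with a finite value μ(a), there exists x̂₀ ∈ (a,b) such that μ is strictly increasing on (a, x̂₀) and both c and μ are concave on (x̂₀, b), and there exist K₀ > 0 and a pair (w̃,ỹ) with a < w̃ < ỹ < b and F_{K₀}(w̃,ỹ) > γ c̄(b). For each K ∈ (0, K₀], let F*_K = sup_{𝓡} F_K and let (w*_K, y*_K) denote the unique maximizing pair of F_K, and let ŷ be the unique maximizer of h on (a,b). Then F*_K is strictly decreasing in K, F*_K < h(ŷ) for every K > 0, lim_{K→0⁺} F*_K = h(ŷ), and both w*_K → ŷ and y*_K → ŷ as K → 0⁺. -/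
open MeasureTheory Filter Set Topology
open scoped Classical

noncomputable section

namespace S19
open MeasureTheory Filter Set Topology

variable {a : ℝ} {b : EReal}

lemma stInt_def {x : ℝ} : x ∈ stInt a b ↔ a < x ∧ (x : EReal) < b := Iff.rfl

lemma stInt_cases (hab : (a : EReal) < b) :
    (b = ⊤ ∧ stInt a b = Set.Ioi a) ∨
      ∃ b' : ℝ, b = (b' : EReal) ∧ a < b' ∧ stInt a b = Set.Ioo a b' := by
  by_cases hb : b = ⊤
  · refine Or.inl ⟨hb, ?_⟩
    ext x; simp [stInt, hb]
  · have hbb : b ≠ ⊥ := by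
      intro h; rw [h] at hab; exact absurd hab (by simp)
    refine Or.inr ⟨b.toReal, (EReal.coe_toReal hb hbb).symm, ?_, ?_⟩
    · have := hab; rw [← EReal.coe_toReal hb hbb] at this; exact_mod_cast this
    · ext x
      constructor
      · rintro ⟨h1, h2⟩
        refine ⟨h1, ?_⟩
        rw [← EReal.coe_toReal hb hbb] at h2; exact_mod_cast h2
      · rintro ⟨h1, h2⟩
        exact ⟨h1, by rw [← EReal.coe_toReal hb hbb]; exact_mod_cast h2⟩

lemma isOpen_stInt (hab : (a : EReal) < b) : IsOpen (stInt a b) := by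
  rcases stInt_cases hab with ⟨_, h⟩ | ⟨b', _, _, h⟩ <;> rw [h]
  exacts [isOpen_Ioi, isOpen_Ioo]

lemma ordConnected_stInt (hab : (a : EReal) < b) : (stInt a b).OrdConnected := by
  rcases stInt_cases hab with ⟨_, h⟩ | ⟨b', _, _, h⟩ <;> rw [h]
  exacts [ordConnected_Ioi, ordConnected_Ioo]

lemma stInt_subset_Ioi : stInt a b ⊆ Set.Ioi a := fun _ h => h.1

lemma Ioo_subset_stInt {x : ℝ} (hx : x ∈ stInt a b) : Set.Ioo a x ⊆ stInt a b :=
  fun u hu => ⟨hu.1, lt_trans (by exact_mod_cast hu.2) hx.2⟩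

lemma mem_stInt_of_lt {w x : ℝ} (hx : x ∈ stInt a b) (haw : a < w) (hwx : w ≤ x) :
    w ∈ stInt a b := ⟨haw, lt_of_le_of_lt (by exact_mod_cast hwx) hx.2⟩

lemma Icc_subset_stInt (hab : (a : EReal) < b) {w y : ℝ} (hw : w ∈ stInt a b)
    (hy : y ∈ stInt a b) : Set.Icc w y ⊆ stInt a b :=
  (ordConnected_stInt hab).out hw hy

lemma uIcc_subset_stInt (hab : (a : EReal) < b) {w y : ℝ} (hw : w ∈ stInt a b)
    (hy : y ∈ stInt a b) : Set.uIcc w y ⊆ stInt a b :=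
  (ordConnected_stInt hab).uIcc_subset hw hy

end S19
namespace S19
open MeasureTheory Filter Set Topology

section Prim

variable {a : ℝ} {S : Set ℝ} {ρ : ℝ → ℝ}

lemma prim_intervalIntegrable (hSc : S.OrdConnected) (hρ : ContinuousOn ρ S)
    (hSm : MeasurableSet S) {w y : ℝ} (hw : w ∈ S) (hy : y ∈ S) :
    IntervalIntegrable ρ volume w y :=
  (hρ.mono (hSc.uIcc_subset hw hy)).intervalIntegrable

lemma prim_sub (hSa : S ⊆ Set.Ioi a) (hSc : S.OrdConnected) (hρ : ContinuousOn ρ S)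
    (hSm : MeasurableSet S)
    (hint : ∀ x ∈ S, IntegrableOn ρ (Set.Ioo a x))
    {w y : ℝ} (hw : w ∈ S) (hy : y ∈ S) (hwy : w ≤ y) :
    (∫ u in Set.Ioo a y, ρ u) - (∫ u in Set.Ioo a w, ρ u) = ∫ u in w..y, ρ u := by
  have haw : a < w := hSa hw
  have hay : a < y := lt_of_lt_of_le haw hwy
  have hsplit : Set.Ioo a y = Set.Ioo a w ∪ Set.Ico w y := by
    ext u
    constructor
    · rintro ⟨h1, h2⟩
      rcases lt_or_ge u w with h | h
      · exact Or.inl ⟨h1, h⟩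
      · exact Or.inr ⟨h, h2⟩
    · rintro (⟨h1, h2⟩ | ⟨h1, h2⟩)
      · exact ⟨h1, lt_of_lt_of_le h2 hwy⟩
      · exact ⟨lt_of_lt_of_le haw h1, h2⟩
  have hdisj : Disjoint (Set.Ioo a w) (Set.Ico w y) := by
    apply Set.disjoint_left.mpr
    rintro u ⟨_, h2⟩ ⟨h3, _⟩
    exact absurd h3 (not_le.mpr h2)
  have hi1 : IntegrableOn ρ (Set.Ioo a w) volume :=
    (hint y hy).mono_set (by rw [hsplit]; exact Set.subset_union_left)
  have hi2 : IntegrableOn ρ (Set.Ico w y) volume :=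
    (hint y hy).mono_set (by rw [hsplit]; exact Set.subset_union_right)
  rw [hsplit, MeasureTheory.setIntegral_union hdisj measurableSet_Ico hi1 hi2]
  rw [intervalIntegral.integral_of_le hwy, MeasureTheory.integral_Ico_eq_integral_Ioo,
    MeasureTheory.integral_Ioc_eq_integral_Ioo]
  ring

lemma prim_hasDerivAt (hSo : IsOpen S) (hSa : S ⊆ Set.Ioi a) (hSc : S.OrdConnected)
    (hρ : ContinuousOn ρ S)
    (hint : ∀ x ∈ S, IntegrableOn ρ (Set.Ioo a x))
    {x : ℝ} (hx : x ∈ S) :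
    HasDerivAt (fun t => ∫ u in Set.Ioo a t, ρ u) (ρ x) x := by
  obtain ⟨ε, hε, hball⟩ := Metric.isOpen_iff.mp hSo x hx
  set w := x - ε / 2 with hw
  have hwS : w ∈ S := by
    apply hball
    simp only [hw, Metric.mem_ball, Real.dist_eq]
    rw [abs_lt]
    constructor <;> nlinarith
  have hwx : w < x := by rw [hw]; linarith
  set U := Set.Ioi w ∩ S with hU
  have hUopen : IsOpen U := isOpen_Ioi.inter hSo
  have hxU : x ∈ U := ⟨hwx, hx⟩
  have hkey : ∀ t ∈ U, (∫ u in Set.Ioo a t, ρ u)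
      = (∫ u in Set.Ioo a w, ρ u) + ∫ u in w..t, ρ u := by
    intro t ht
    have := prim_sub hSa hSc hρ hSo.measurableSet hint hwS ht.2 (le_of_lt ht.1)
    linarith
  have hd : HasDerivAt (fun t => (∫ u in Set.Ioo a w, ρ u) + ∫ u in w..t, ρ u) (ρ x) x := by
    apply HasDerivAt.const_add
    apply intervalIntegral.integral_hasDerivAt_right
      (prim_intervalIntegrable hSc hρ hSo.measurableSet hwS hx)
    · exact ⟨S, hSo.mem_nhds hx, hρ.aestronglyMeasurable hSo.measurableSet⟩
    · exact hρ.continuousAt (hSo.mem_nhds hx)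
  exact hd.congr_of_eventuallyEq <|
    Filter.eventuallyEq_of_mem (hUopen.mem_nhds hxU) hkey

lemma prim_continuousAt (hSo : IsOpen S) (hSa : S ⊆ Set.Ioi a) (hSc : S.OrdConnected)
    (hρ : ContinuousOn ρ S)
    (hint : ∀ x ∈ S, IntegrableOn ρ (Set.Ioo a x))
    {x : ℝ} (hx : x ∈ S) :
    ContinuousAt (fun t => ∫ u in Set.Ioo a t, ρ u) x :=
  (prim_hasDerivAt hSo hSa hSc hρ hint hx).continuousAt

end Prim
end S19
namespace S19
open MeasureTheory Filter Set Topology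

/-- Bundled standing hypotheses. -/
structure Ctx (a : ℝ) (b : EReal) (μ σ : ℝ → ℝ) (x₀ : ℝ) : Prop where
  hab : (a : EReal) < b
  hx₀ : x₀ ∈ stInt a b
  hμcont : ContinuousOn μ (stInt a b)
  hσcont : ContinuousOn σ (stInt a b)
  hσpos : ∀ x ∈ stInt a b, 0 < (σ x) ^ 2
  hMfin : ∀ x ∈ stInt a b, IntegrableOn (mDen μ σ x₀) (Set.Ioo a x) volume
  hsa : Tendsto (sDen μ σ x₀) (𝓝[>] a) atTop

namespace Ctx

variable {a : ℝ} {b : EReal} {μ σ : ℝ → ℝ} {x₀ : ℝ} (H : Ctx a b μ σ x₀)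
include H

lemma hSo : IsOpen (stInt a b) := isOpen_stInt H.hab
lemma hSc : (stInt a b).OrdConnected := ordConnected_stInt H.hab
lemma hSa : stInt a b ⊆ Set.Ioi a := stInt_subset_Ioi
lemma hSm : MeasurableSet (stInt a b) := H.hSo.measurableSet

lemma cont_f : ContinuousOn (fun y => 2 * μ y / (σ y) ^ 2) (stInt a b) :=
  (continuousOn_const.mul H.hμcont).div (H.hσcont.pow 2)
    (fun x hx => ne_of_gt (H.hσpos x hx))

lemma hasDerivAt_I {x : ℝ} (hx : x ∈ stInt a b) :
    HasDerivAt (fun t => ∫ y in x₀..t, 2 * μ y / (σ y) ^ 2)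
      (2 * μ x / (σ x) ^ 2) x := by
  apply intervalIntegral.integral_hasDerivAt_right
  · exact (H.cont_f.mono (uIcc_subset_stInt H.hab H.hx₀ hx)).intervalIntegrable
  · exact ⟨stInt a b, H.hSo.mem_nhds hx, H.cont_f.aestronglyMeasurable H.hSm⟩
  · exact H.cont_f.continuousAt (H.hSo.mem_nhds hx)

lemma s_pos (x : ℝ) : 0 < sDen μ σ x₀ x := Real.exp_pos _

lemma hasDerivAt_s {x : ℝ} (hx : x ∈ stInt a b) :
    HasDerivAt (sDen μ σ x₀) (-(2 * μ x / (σ x) ^ 2) * sDen μ σ x₀ x) x := by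
  have h1 := ((H.hasDerivAt_I hx).neg).exp
  simp only [Pi.neg_apply] at h1
  simp only [sDen]
  rw [show sDen μ σ x₀ = fun x => Real.exp (-(∫ y in x₀..x, 2 * μ y / (σ y) ^ 2)) from rfl]
  convert h1 using 1
  ring

lemma cont_s : ContinuousOn (sDen μ σ x₀) (stInt a b) :=
  fun x hx => ((H.hasDerivAt_s hx).continuousAt).continuousWithinAt

lemma m_pos {x : ℝ} (hx : x ∈ stInt a b) : 0 < mDen μ σ x₀ x :=
  div_pos two_pos (mul_pos (H.hσpos x hx) (H.s_pos x))

lemma cont_m : ContinuousOn (mDen μ σ x₀) (stInt a b) :=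
  continuousOn_const.div ((H.hσcont.pow 2).mul H.cont_s)
    (fun x hx => ne_of_gt (mul_pos (H.hσpos x hx) (H.s_pos x)))

lemma hasDerivAt_inv_s {x : ℝ} (hx : x ∈ stInt a b) :
    HasDerivAt (fun t => (sDen μ σ x₀ t)⁻¹) (μ x * mDen μ σ x₀ x) x := by
  have heq : (fun t => (sDen μ σ x₀ t)⁻¹)
      = fun t => Real.exp (∫ y in x₀..t, 2 * μ y / (σ y) ^ 2) := by
    funext t; simp [sDen, Real.exp_neg]
  rw [heq]
  have h1 := (H.hasDerivAt_I hx).exp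
  convert h1 using 1
  have hσ := H.hσpos x hx
  have hs := H.s_pos x
  have : Real.exp (∫ y in x₀..x, 2 * μ y / (σ y) ^ 2) = (sDen μ σ x₀ x)⁻¹ := by
    simp [sDen, Real.exp_neg]
  rw [this, mDen]
  field_simp

/-- Integrability of `φ * m` on `(a,x)` for `φ` continuous on `S` and bounded near `a`. -/
lemma integrableOn_mul_m {φ : ℝ → ℝ} (hφ : ContinuousOn φ (stInt a b))
    {B : ℝ} (hbd : ∀ᶠ u in 𝓝[>] a, |φ u| ≤ B)
    {x : ℝ} (hx : x ∈ stInt a b) :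
    IntegrableOn (fun u => φ u * mDen μ σ x₀ u) (Set.Ioo a x) volume := by
  obtain ⟨u', hu', hsub⟩ := mem_nhdsGT_iff_exists_Ioo_subset.mp hbd
  have hax : a < x := hx.1
  set t : ℝ := min ((a + u') / 2) ((a + x) / 2) with ht
  have hat : a < t := by
    apply lt_min
    · simp at hu' ⊢; linarith [hu']
    · linarith
  have htu' : t < u' := by
    have : (a + u') / 2 < u' := by simp at hu' ⊢; linarith [hu']
    exact lt_of_le_of_lt (min_le_left _ _) this
  have htx : t < x := lt_of_le_of_lt (min_le_right _ _) (by linarith)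
  have htS : t ∈ stInt a b := mem_stInt_of_lt hx hat (le_of_lt htx)
  have hIccS : Set.Icc t x ⊆ stInt a b := Icc_subset_stInt H.hab htS hx
  have hcont_φm : ContinuousOn (fun u => φ u * mDen μ σ x₀ u) (stInt a b) :=
    hφ.mul H.cont_m
  have hi2 : IntegrableOn (fun u => φ u * mDen μ σ x₀ u) (Set.Ico t x) volume :=
    ((hcont_φm.mono hIccS).integrableOn_Icc).mono_set Set.Ico_subset_Icc_self
  have hi1 : IntegrableOn (fun u => φ u * mDen μ σ x₀ u) (Set.Ioo a t) volume := by
    have hB0 : 0 ≤ B := le_trans (abs_nonneg _) (hsub ⟨hat, htu'⟩)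
    have hIooS : Set.Ioo a t ⊆ stInt a b := Ioo_subset_stInt htS
    apply MeasureTheory.Integrable.mono
      (((H.hMfin t htS).const_mul B))
    · exact (hcont_φm.mono hIooS).aestronglyMeasurable measurableSet_Ioo
    · rw [MeasureTheory.ae_restrict_iff' measurableSet_Ioo]
      filter_upwards with u
      intro hu
      have humem : u ∈ stInt a b := hIooS hu
      have hm := H.m_pos humem
      have hφu : |φ u| ≤ B := hsub ⟨hu.1, lt_trans hu.2 htu'⟩
      simp only [Real.norm_eq_abs, abs_mul, abs_of_pos hm, abs_of_nonneg hB0]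
      exact mul_le_mul_of_nonneg_right hφu (le_of_lt hm)
  have hsplit : Set.Ioo a x ⊆ Set.Ioo a t ∪ Set.Ico t x := by
    intro u hu
    rcases lt_or_ge u t with h | h
    · exact Or.inl ⟨hu.1, h⟩
    · exact Or.inr ⟨h, hu.2⟩
  exact (hi1.union hi2).mono_set hsplit

end Ctx
end S19
namespace S19
open MeasureTheory Filter Set Topology

/-- Numerator integral of `hF`. -/
def NNf (μ σ c : ℝ → ℝ) (x₀ a p γ x : ℝ) : ℝ :=
  ∫ u in Set.Ioo a x, (γ * c u + p * μ u) * mDen μ σ x₀ u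

/-- `∫_a^x c·m`. -/
def NCf (μ σ c : ℝ → ℝ) (x₀ a x : ℝ) : ℝ :=
  ∫ u in Set.Ioo a x, c u * mDen μ σ x₀ u

structure CtxC (a : ℝ) (b : EReal) (μ σ c : ℝ → ℝ) (x₀ μa : ℝ)
    extends Ctx a b μ σ x₀ : Prop where
  hμa : Tendsto μ (𝓝[>] a) (𝓝 μa)
  hccont : ContinuousOn c (stInt a b)
  hcnn : ∀ x ∈ stInt a b, 0 ≤ c x
  hcmono : MonotoneOn c (stInt a b)

namespace CtxC

variable {a : ℝ} {b : EReal} {μ σ c : ℝ → ℝ} {x₀ μa p γ : ℝ}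
  (H : Ctx a b μ σ x₀) (HC : CtxC a b μ σ c x₀ μa)
include HC

lemma bdd_mu : ∀ᶠ u in 𝓝[>] a, |μ u| ≤ |μa| + 1 := by
  have h1 : Tendsto (fun u => |μ u|) (𝓝[>] a) (𝓝 |μa|) := HC.hμa.abs
  exact h1.eventually (eventually_le_nhds (by linarith))

lemma bdd_c : ∀ᶠ u in 𝓝[>] a, |c u| ≤ c x₀ := by
  have hmem : Set.Ioo a x₀ ∈ 𝓝[>] a :=
    Ioo_mem_nhdsGT_of_mem ⟨le_refl a, HC.hx₀.1⟩
  filter_upwards [hmem] with u hu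
  have huS : u ∈ stInt a b := Ioo_subset_stInt HC.hx₀ hu
  rw [abs_of_nonneg (HC.hcnn u huS)]
  exact HC.hcmono huS HC.hx₀ (le_of_lt hu.2)

lemma int_cm {x : ℝ} (hx : x ∈ stInt a b) :
    IntegrableOn (fun u => c u * mDen μ σ x₀ u) (Set.Ioo a x) volume :=
  HC.toCtx.integrableOn_mul_m HC.hccont HC.bdd_c hx

lemma int_mum {x : ℝ} (hx : x ∈ stInt a b) :
    IntegrableOn (fun u => μ u * mDen μ σ x₀ u) (Set.Ioo a x) volume :=
  HC.toCtx.integrableOn_mul_m HC.hμcont HC.bdd_mu hx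

lemma int_Gm {x : ℝ} (hx : x ∈ stInt a b) :
    IntegrableOn (fun u => (γ * c u + p * μ u) * mDen μ σ x₀ u) (Set.Ioo a x) volume := by
  apply HC.toCtx.integrableOn_mul_m
    ((continuousOn_const.mul HC.hccont).add (continuousOn_const.mul HC.hμcont))
    (B := |γ| * c x₀ + |p| * (|μa| + 1))
  · filter_upwards [HC.bdd_c, HC.bdd_mu] with u h1 h2
    calc |γ * c u + p * μ u| ≤ |γ * c u| + |p * μ u| := abs_add_le _ _
      _ = |γ| * |c u| + |p| * |μ u| := by rw [abs_mul, abs_mul]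
      _ ≤ |γ| * c x₀ + |p| * (|μa| + 1) :=
          add_le_add (mul_le_mul_of_nonneg_left h1 (abs_nonneg γ))
            (mul_le_mul_of_nonneg_left h2 (abs_nonneg p))
  · exact hx

/-- The key improper-integral identity `∫_a^x μ m = 1/s(x)`. -/
lemma integral_mum_eq {x : ℝ} (hx : x ∈ stInt a b) :
    ∫ u in Set.Ioo a x, μ u * mDen μ σ x₀ u = (sDen μ σ x₀ x)⁻¹ := by
  have hax : a < x := hx.1
  set u : ℕ → ℝ := fun n => a + (x - a) / (n + 2) with hu
  have hu_mem : ∀ n, u n ∈ Set.Ioo a x := by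
    intro n
    constructor
    · simp only [hu, lt_add_iff_pos_right]
      exact div_pos (by linarith) (by positivity)
    · simp only [hu]
      have h2 : (x - a) / (n + 2) < x - a := by
        apply div_lt_self (by linarith)
        have : (0:ℝ) ≤ n := Nat.cast_nonneg n
        linarith
      linarith
  have hu_S : ∀ n, u n ∈ stInt a b := fun n => Ioo_subset_stInt hx (hu_mem n)
  have hu_anti : ∀ n k : ℕ, n ≤ k → u k ≤ u n := by
    intro n k hnk
    simp only [hu, add_le_add_iff_left]
    apply div_le_div_of_nonneg_left (by linarith) (by positivity)
    have : (n:ℝ) ≤ (k:ℝ) := Nat.cast_le.mpr hnk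
    linarith
  have hu_tendsto : Tendsto u atTop (𝓝[>] a) := by
    apply tendsto_nhdsWithin_of_tendsto_nhds_of_eventually_within
    · have : Tendsto (fun n : ℕ => (x - a) / (n + 2)) atTop (𝓝 0) := by
        apply Tendsto.div_atTop tendsto_const_nhds
        exact tendsto_atTop_add_const_right _ 2 tendsto_natCast_atTop_atTop
      simpa using tendsto_const_nhds.add this
    · exact Filter.Eventually.of_forall (fun n => (hu_mem n).1)
  -- sets
  set sets : ℕ → Set ℝ := fun n => Set.Ioo (u n) x with hsets
  have hmono : Monotone sets := by
    intro n k hnk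
    exact Set.Ioo_subset_Ioo (hu_anti n k hnk) le_rfl
  have hunion : (⋃ n, sets n) = Set.Ioo a x := by
    apply Set.Subset.antisymm
    · apply Set.iUnion_subset
      intro n
      exact Set.Ioo_subset_Ioo (le_of_lt (hu_mem n).1) le_rfl
    · intro t ht
      have hta : 0 < t - a := by linarith [ht.1]
      obtain ⟨n, hn⟩ := exists_nat_gt ((x - a) / (t - a))
      refine Set.mem_iUnion.mpr ⟨n, ?_, ht.2⟩
      show a + (x - a) / (↑n + 2) < t
      have h1 : (x - a) / (↑n + 2) < t - a := by
        rw [div_lt_iff₀ (by positivity)]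
        rw [div_lt_iff₀ hta] at hn
        have h2 : (t - a) * ((n:ℝ) + 2) = ↑n * (t - a) + 2 * (t - a) := by ring
        linarith
      linarith
  have hlim1 : Tendsto (fun n => ∫ v in sets n, μ v * mDen μ σ x₀ v) atTop
      (𝓝 (∫ v in Set.Ioo a x, μ v * mDen μ σ x₀ v)) := by
    have := MeasureTheory.tendsto_setIntegral_of_monotone
      (fun n => measurableSet_Ioo) hmono (by rw [hunion]; exact HC.int_mum hx)
    rwa [hunion] at this
  have heval : ∀ n, (∫ v in sets n, μ v * mDen μ σ x₀ v)
      = (sDen μ σ x₀ x)⁻¹ - (sDen μ σ x₀ (u n))⁻¹ := by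
    intro n
    have hle : u n ≤ x := le_of_lt (hu_mem n).2
    have hsub : Set.uIcc (u n) x ⊆ stInt a b :=
      uIcc_subset_stInt HC.hab (hu_S n) hx
    have hftc := intervalIntegral.integral_eq_sub_of_hasDerivAt
      (f := fun t => (sDen μ σ x₀ t)⁻¹)
      (f' := fun t => μ t * mDen μ σ x₀ t)
      (fun t ht => HC.toCtx.hasDerivAt_inv_s (hsub ht))
      (((HC.hμcont.mul HC.toCtx.cont_m).mono hsub).intervalIntegrable)
    rw [← hftc, intervalIntegral.integral_of_le hle,
      MeasureTheory.integral_Ioc_eq_integral_Ioo]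
  have hlim2 : Tendsto (fun n => ∫ v in sets n, μ v * mDen μ σ x₀ v) atTop
      (𝓝 ((sDen μ σ x₀ x)⁻¹ - 0)) := by
    simp only [heval]
    apply Tendsto.const_sub
    have : Tendsto (fun t => (sDen μ σ x₀ t)⁻¹) (𝓝[>] a) (𝓝 0) :=
      (HC.hsa).inv_tendsto_atTop
    exact this.comp hu_tendsto
  have := tendsto_nhds_unique hlim1 hlim2
  rw [this, sub_zero]

end CtxC
end S19
namespace S19
open MeasureTheory Filter Set Topology

lemma gF_def (μ σ c : ℝ → ℝ) (x₀ a x : ℝ) :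
    gF μ σ c x₀ a x = ∫ v in x₀..x, NCf μ σ c x₀ a v * sDen μ σ x₀ v := rfl

lemma hF_def (μ σ c : ℝ → ℝ) (x₀ a p γ x : ℝ) :
    hF μ σ c x₀ a p γ x = NNf μ σ c x₀ a p γ x / Mab μ σ x₀ a x := rfl

namespace Ctx

variable {a : ℝ} {b : EReal} {μ σ : ℝ → ℝ} {x₀ : ℝ} (H : Ctx a b μ σ x₀)
include H

lemma Mab_pos {x : ℝ} (hx : x ∈ stInt a b) : 0 < Mab μ σ x₀ a x := by
  rw [Mab]
  rw [MeasureTheory.setIntegral_pos_iff_support_of_nonneg_ae ?nn (H.hMfin x hx)]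
  case nn =>
    filter_upwards [MeasureTheory.ae_restrict_mem measurableSet_Ioo] with u hu
    simp only [Pi.zero_apply]
    exact le_of_lt (H.m_pos (Ioo_subset_stInt hx hu))
  have hsub : Set.Ioo a x ⊆ Function.support (mDen μ σ x₀) ∩ Set.Ioo a x := by
    intro u hu
    exact ⟨ne_of_gt (H.m_pos (Ioo_subset_stInt hx hu)), hu⟩
  calc (0:ENNReal) < volume (Set.Ioo a x) := by
        rw [Real.volume_Ioo]; simp [hx.1]
    _ ≤ _ := measure_mono hsub

lemma cont_Mab : ContinuousOn (Mab μ σ x₀ a) (stInt a b) := by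
  intro x hx
  exact (prim_continuousAt H.hSo H.hSa H.hSc H.cont_m H.hMfin hx).continuousWithinAt

lemma cont_Ms : ContinuousOn (fun v => Mab μ σ x₀ a v * sDen μ σ x₀ v) (stInt a b) :=
  H.cont_Mab.mul H.cont_s

lemma intInt_Ms {w y : ℝ} (hw : w ∈ stInt a b) (hy : y ∈ stInt a b) :
    IntervalIntegrable (fun v => Mab μ σ x₀ a v * sDen μ σ x₀ v) volume w y :=
  (H.cont_Ms.mono (uIcc_subset_stInt H.hab hw hy)).intervalIntegrable

lemma xiF_sub {w y : ℝ} (hw : w ∈ stInt a b) (hy : y ∈ stInt a b) :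
    xiF μ σ x₀ a y - xiF μ σ x₀ a w = ∫ v in w..y, Mab μ σ x₀ a v * sDen μ σ x₀ v := by
  rw [xiF, xiF]
  exact intervalIntegral.integral_interval_sub_left (H.intInt_Ms H.hx₀ hy)
    (H.intInt_Ms H.hx₀ hw)

lemma xiF_sub_pos {w y : ℝ} (hw : w ∈ stInt a b) (hy : y ∈ stInt a b) (hwy : w < y) :
    0 < xiF μ σ x₀ a y - xiF μ σ x₀ a w := by
  rw [H.xiF_sub hw hy]
  apply intervalIntegral.intervalIntegral_pos_of_pos_on (H.intInt_Ms hw hy)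
  · intro v hv
    have hvS : v ∈ stInt a b := Icc_subset_stInt H.hab hw hy ⟨le_of_lt hv.1, le_of_lt hv.2⟩
    exact mul_pos (H.Mab_pos hvS) (H.s_pos v)
  · exact hwy

lemma xiF_mono {w y : ℝ} (hw : w ∈ stInt a b) (hy : y ∈ stInt a b) (hwy : w ≤ y) :
    xiF μ σ x₀ a w ≤ xiF μ σ x₀ a y := by
  rcases eq_or_lt_of_le hwy with rfl | h
  · exact le_rfl
  · linarith [H.xiF_sub_pos hw hy h]

end Ctx

namespace CtxC

variable {a : ℝ} {b : EReal} {μ σ c : ℝ → ℝ} {x₀ μa p γ : ℝ}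
  (HC : CtxC a b μ σ c x₀ μa)
include HC

lemma cont_NCf : ContinuousOn (NCf μ σ c x₀ a) (stInt a b) := by
  intro x hx
  exact (prim_continuousAt HC.toCtx.hSo HC.toCtx.hSa HC.toCtx.hSc
    (HC.hccont.mul HC.toCtx.cont_m) (fun x hx => HC.int_cm hx) hx).continuousWithinAt

lemma cont_NNf : ContinuousOn (NNf μ σ c x₀ a p γ) (stInt a b) := by
  intro x hx
  have hcont : ContinuousOn (fun u => (γ * c u + p * μ u) * mDen μ σ x₀ u) (stInt a b) :=
    ((continuousOn_const.mul HC.hccont).add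
      (continuousOn_const.mul HC.hμcont)).mul HC.toCtx.cont_m
  exact (prim_continuousAt HC.toCtx.hSo HC.toCtx.hSa HC.toCtx.hSc hcont
    (fun x hx => HC.int_Gm hx) hx).continuousWithinAt

lemma NN_eq {x : ℝ} (hx : x ∈ stInt a b) :
    NNf μ σ c x₀ a p γ x
      = γ * NCf μ σ c x₀ a x + p * (sDen μ σ x₀ x)⁻¹ := by
  rw [NNf, NCf, ← HC.integral_mum_eq hx]
  have h1 : ∀ u, (γ * c u + p * μ u) * mDen μ σ x₀ u
      = γ * (c u * mDen μ σ x₀ u) + p * (μ u * mDen μ σ x₀ u) := fun u => by ring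
  calc ∫ u in Set.Ioo a x, (γ * c u + p * μ u) * mDen μ σ x₀ u
      = ∫ u in Set.Ioo a x, (γ * (c u * mDen μ σ x₀ u) + p * (μ u * mDen μ σ x₀ u)) := by
        congr 1; funext u; exact h1 u
    _ = (∫ u in Set.Ioo a x, γ * (c u * mDen μ σ x₀ u))
        + ∫ u in Set.Ioo a x, p * (μ u * mDen μ σ x₀ u) :=
        MeasureTheory.integral_add ((HC.int_cm hx).const_mul γ)
          ((HC.int_mum hx).const_mul p)
    _ = γ * (∫ u in Set.Ioo a x, c u * mDen μ σ x₀ u)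
        + p * ∫ u in Set.Ioo a x, μ u * mDen μ σ x₀ u := by
        rw [MeasureTheory.integral_const_mul, MeasureTheory.integral_const_mul]

lemma cont_NNs :
    ContinuousOn (fun v => NNf μ σ c x₀ a p γ v * sDen μ σ x₀ v) (stInt a b) :=
  HC.cont_NNf.mul HC.toCtx.cont_s

lemma intInt_NNs {w y : ℝ} (hw : w ∈ stInt a b) (hy : y ∈ stInt a b) :
    IntervalIntegrable (fun v => NNf μ σ c x₀ a p γ v * sDen μ σ x₀ v) volume w y :=
  (HC.cont_NNs.mono (uIcc_subset_stInt HC.hab hw hy)).intervalIntegrable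

lemma intInt_NCs {w y : ℝ} (hw : w ∈ stInt a b) (hy : y ∈ stInt a b) :
    IntervalIntegrable (fun v => NCf μ σ c x₀ a v * sDen μ σ x₀ v) volume w y :=
  ((HC.cont_NCf.mul HC.toCtx.cont_s).mono
    (uIcc_subset_stInt HC.hab hw hy)).intervalIntegrable

lemma gF_sub {w y : ℝ} (hw : w ∈ stInt a b) (hy : y ∈ stInt a b) :
    p * (y - w) + γ * (gF μ σ c x₀ a y - gF μ σ c x₀ a w)
      = ∫ v in w..y, NNf μ σ c x₀ a p γ v * sDen μ σ x₀ v := by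
  have h1 : gF μ σ c x₀ a y - gF μ σ c x₀ a w
      = ∫ v in w..y, NCf μ σ c x₀ a v * sDen μ σ x₀ v := by
    rw [gF_def, gF_def]
    exact intervalIntegral.integral_interval_sub_left (HC.intInt_NCs HC.hx₀ hy)
      (HC.intInt_NCs HC.hx₀ hw)
  have h2 : p * (y - w) = ∫ _v in w..y, p := by
    rw [intervalIntegral.integral_const, smul_eq_mul, mul_comm]
  rw [h1, h2, ← intervalIntegral.integral_const_mul]
  rw [← intervalIntegral.integral_add intervalIntegrable_const
    ((HC.intInt_NCs hw hy).const_mul γ)]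
  apply intervalIntegral.integral_congr
  intro v hv
  have hvS : v ∈ stInt a b := uIcc_subset_stInt HC.hab hw hy hv
  have hs := HC.toCtx.s_pos v
  show p + γ * (NCf μ σ c x₀ a v * sDen μ σ x₀ v) = NNf μ σ c x₀ a p γ v * sDen μ σ x₀ v
  rw [HC.NN_eq hvS]
  field_simp
  ring

lemma FF_formula {w y : ℝ} (hw : w ∈ stInt a b) (hy : y ∈ stInt a b) (K : ℝ) :
    FF μ σ c x₀ a p K γ w y
      = ((∫ v in w..y, NNf μ σ c x₀ a p γ v * sDen μ σ x₀ v) - K)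
          / (xiF μ σ x₀ a y - xiF μ σ x₀ a w) := by
  rw [FF]
  congr 1
  linarith [HC.gF_sub (p := p) (γ := γ) hw hy]

end CtxC
end S19
namespace S19
open MeasureTheory Filter Set Topology

namespace CtxC

variable {a : ℝ} {b : EReal} {μ σ c : ℝ → ℝ} {x₀ μa p γ : ℝ}
  (HC : CtxC a b μ σ c x₀ μa)
include HC

lemma cont_hF : ContinuousOn (hF μ σ c x₀ a p γ) (stInt a b) := by
  have heq : hF μ σ c x₀ a p γ
      = fun x => NNf μ σ c x₀ a p γ x / Mab μ σ x₀ a x := rfl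
  rw [heq]
  exact HC.cont_NNf.div HC.toCtx.cont_Mab (fun x hx => ne_of_gt (HC.toCtx.Mab_pos hx))

lemma NNs_le {yh : ℝ} (hyh : yh ∈ stInt a b)
    (hle : ∀ v ∈ stInt a b, hF μ σ c x₀ a p γ v ≤ hF μ σ c x₀ a p γ yh)
    {v : ℝ} (hv : v ∈ stInt a b) :
    NNf μ σ c x₀ a p γ v * sDen μ σ x₀ v
      ≤ hF μ σ c x₀ a p γ yh * (Mab μ σ x₀ a v * sDen μ σ x₀ v) := by
  have hM := HC.toCtx.Mab_pos hv
  have h1 : NNf μ σ c x₀ a p γ v ≤ hF μ σ c x₀ a p γ yh * Mab μ σ x₀ a v := by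
    have := hle v hv
    rw [hF_def] at this
    exact (div_le_iff₀ hM).mp this
  calc NNf μ σ c x₀ a p γ v * sDen μ σ x₀ v
      ≤ (hF μ σ c x₀ a p γ yh * Mab μ σ x₀ a v) * sDen μ σ x₀ v :=
        mul_le_mul_of_nonneg_right h1 (HC.toCtx.s_pos v).le
    _ = _ := by ring

lemma integral_NNs_le {yh : ℝ} (hyh : yh ∈ stInt a b)
    (hle : ∀ v ∈ stInt a b, hF μ σ c x₀ a p γ v ≤ hF μ σ c x₀ a p γ yh)
    {w y : ℝ} (hw : w ∈ stInt a b) (hy : y ∈ stInt a b) (hwy : w ≤ y) :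
    (∫ v in w..y, NNf μ σ c x₀ a p γ v * sDen μ σ x₀ v)
      ≤ hF μ σ c x₀ a p γ yh * (xiF μ σ x₀ a y - xiF μ σ x₀ a w) := by
  rw [HC.toCtx.xiF_sub hw hy, ← intervalIntegral.integral_const_mul]
  apply intervalIntegral.integral_mono_on hwy (HC.intInt_NNs hw hy)
    ((HC.toCtx.intInt_Ms hw hy).const_mul _)
  intro v hv
  exact HC.NNs_le hyh hle (Icc_subset_stInt HC.hab hw hy hv)

lemma FF_le {yh : ℝ} (hyh : yh ∈ stInt a b)
    (hle : ∀ v ∈ stInt a b, hF μ σ c x₀ a p γ v ≤ hF μ σ c x₀ a p γ yh)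
    {w y : ℝ} (hw : w ∈ stInt a b) (hy : y ∈ stInt a b) (hwy : w < y) (K : ℝ) :
    FF μ σ c x₀ a p K γ w y
      ≤ hF μ σ c x₀ a p γ yh - K / (xiF μ σ x₀ a y - xiF μ σ x₀ a w) := by
  have hD := HC.toCtx.xiF_sub_pos hw hy hwy
  rw [HC.FF_formula hw hy K]
  rw [div_le_iff₀ hD]
  have h1 := HC.integral_NNs_le hyh hle hw hy (le_of_lt hwy)
  have h2 : K / (xiF μ σ x₀ a y - xiF μ σ x₀ a w)
      * (xiF μ σ x₀ a y - xiF μ σ x₀ a w) = K := by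
    field_simp
  nlinarith [h1, h2]

lemma FF_lt {yh : ℝ} (hyh : yh ∈ stInt a b)
    (hle : ∀ v ∈ stInt a b, hF μ σ c x₀ a p γ v ≤ hF μ σ c x₀ a p γ yh)
    {w y : ℝ} (hw : w ∈ stInt a b) (hy : y ∈ stInt a b) (hwy : w < y)
    {K : ℝ} (hK : 0 < K) :
    FF μ σ c x₀ a p K γ w y < hF μ σ c x₀ a p γ yh := by
  have hD := HC.toCtx.xiF_sub_pos hw hy hwy
  have := HC.FF_le hyh hle hw hy hwy K
  have : 0 < K / (xiF μ σ x₀ a y - xiF μ σ x₀ a w) := div_pos hK hD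
  linarith [HC.FF_le hyh hle hw hy hwy K]

lemma FF_ge {w y : ℝ} (hw : w ∈ stInt a b) (hy : y ∈ stInt a b) (hwy : w < y)
    {β : ℝ} (hlb : ∀ v ∈ Set.Icc w y,
      β * (Mab μ σ x₀ a v * sDen μ σ x₀ v)
        ≤ NNf μ σ c x₀ a p γ v * sDen μ σ x₀ v) (K : ℝ) :
    β - K / (xiF μ σ x₀ a y - xiF μ σ x₀ a w) ≤ FF μ σ c x₀ a p K γ w y := by
  have hD := HC.toCtx.xiF_sub_pos hw hy hwy
  rw [HC.FF_formula hw hy K, le_div_iff₀ hD]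
  have h1 : β * (xiF μ σ x₀ a y - xiF μ σ x₀ a w)
      ≤ ∫ v in w..y, NNf μ σ c x₀ a p γ v * sDen μ σ x₀ v := by
    rw [HC.toCtx.xiF_sub hw hy, ← intervalIntegral.integral_const_mul]
    exact intervalIntegral.integral_mono_on (le_of_lt hwy)
      ((HC.toCtx.intInt_Ms hw hy).const_mul _) (HC.intInt_NNs hw hy) hlb
  have h2 : K / (xiF μ σ x₀ a y - xiF μ σ x₀ a w)
      * (xiF μ σ x₀ a y - xiF μ σ x₀ a w) = K := by
    field_simp
  nlinarith [h1, h2]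

/-- FF as a function of K, explicit difference. -/
lemma FF_K_diff {w y : ℝ} (hw : w ∈ stInt a b) (hy : y ∈ stInt a b) (K₁ K₂ : ℝ) :
    FF μ σ c x₀ a p K₂ γ w y
      = FF μ σ c x₀ a p K₁ γ w y
        - (K₂ - K₁) / (xiF μ σ x₀ a y - xiF μ σ x₀ a w) := by
  rw [HC.FF_formula hw hy K₁, HC.FF_formula hw hy K₂, div_sub_div_same]
  ring_nf

end CtxC
end S19
namespace S19
open MeasureTheory Filter Set Topology

section AtB
variable {a : ℝ} {b : EReal}

lemma atB_neBot (hab : (a : EReal) < b) : (atB b).NeBot := by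
  rcases stInt_cases hab with ⟨hb, _⟩ | ⟨b', hb, hab', _⟩
  · rw [atB, if_pos hb]; exact atTop_neBot
  · rw [atB, hb, if_neg (by simp)]
    simp only [EReal.toReal_coe]
    exact nhdsLT_neBot b'

lemma atB_eventually_mem (hab : (a : EReal) < b) : ∀ᶠ t in atB b, t ∈ stInt a b := by
  rcases stInt_cases hab with ⟨hb, hS⟩ | ⟨b', hb, hab', hS⟩
  · rw [atB, if_pos hb, hS]
    exact eventually_gt_atTop a
  · subst hb
    rw [atB, if_neg (by simp), hS]
    simp only [EReal.toReal_coe]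
    filter_upwards [Ioo_mem_nhdsLT_of_mem (Set.mem_Ioc.mpr ⟨hab', le_refl b'⟩)] with t ht
    exact ht

lemma atB_eventually_ge (hab : (a : EReal) < b) {u : ℝ} (hu : u ∈ stInt a b) :
    ∀ᶠ t in atB b, u ≤ t := by
  rcases stInt_cases hab with ⟨hb, hS⟩ | ⟨b', hb, hab', hS⟩
  · rw [atB, if_pos hb]
    exact eventually_ge_atTop u
  · subst hb
    rw [atB, if_neg (by simp)]
    simp only [EReal.toReal_coe]
    have hub' : u < b' := by rw [hS] at hu; exact hu.2
    filter_upwards [Ioo_mem_nhdsLT_of_mem (Set.mem_Ioc.mpr ⟨hub', le_refl b'⟩)] with t ht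
    exact le_of_lt ht.1

lemma atB_threshold (hab : (a : EReal) < b) {P : ℝ → Prop}
    (h : ∀ᶠ t in atB b, P t) {x₁ : ℝ} (hx₁ : x₁ ∈ stInt a b) :
    ∃ t ∈ stInt a b, ∀ x ∈ stInt a b, t ≤ x → P x := by
  rcases stInt_cases hab with ⟨hb, hS⟩ | ⟨b', hb, hab', hS⟩
  · rw [atB, if_pos hb] at h
    obtain ⟨N, hN⟩ := eventually_atTop.mp h
    refine ⟨max N x₁, ?_, fun x _ hx => hN x (le_trans (le_max_left _ _) hx)⟩
    rw [hS] at hx₁ ⊢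
    exact lt_of_lt_of_le (Set.mem_Ioi.mp hx₁) (le_max_right _ _)
  · subst hb
    rw [atB, if_neg (by simp)] at h
    simp only [EReal.toReal_coe] at h
    obtain ⟨l, hl, hsub⟩ := mem_nhdsLT_iff_exists_Ioo_subset.mp h
    rw [hS] at hx₁
    set t := (max l x₁ + b') / 2 with ht
    have hlb : l < b' := hl
    have hx₁b : x₁ < b' := hx₁.2
    have hmaxb : max l x₁ < b' := max_lt hlb hx₁b
    have h1 : max l x₁ < t := by rw [ht]; linarith
    have h2 : t < b' := by rw [ht]; linarith
    refine ⟨t, ?_, ?_⟩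
    · rw [hS]
      exact ⟨lt_of_lt_of_le hx₁.1 (le_of_lt (lt_of_le_of_lt (le_max_right l x₁) h1)), h2⟩
    · intro x hx htx
      rw [hS] at hx
      exact hsub ⟨lt_of_le_of_lt (le_max_left l x₁) (lt_of_lt_of_le h1 htx), hx.2⟩

end AtB
end S19
namespace S19
open MeasureTheory Filter Set Topology

namespace CtxC

variable {a : ℝ} {b : EReal} {μ σ c : ℝ → ℝ} {x₀ μa p γ ca : ℝ} {xhat0 : ℝ}
  (HC : CtxC a b μ σ c x₀ μa)
include HC

lemma a_side (hca : Tendsto c (𝓝[>] a) (𝓝 ca))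
    (hxhat0 : xhat0 ∈ stInt a b) (hμmono : StrictMonoOn μ (Set.Ioo a xhat0))
    (hp : 0 < p) (hγ : 0 < γ)
    {α : ℝ} (hle : ∀ x ∈ stInt a b, hF μ σ c x₀ a p γ x ≤ α) :
    γ * ca + p * μa < α ∧
    ∃ t ∈ stInt a b,
      ∀ x ∈ stInt a b, x ≤ t → hF μ σ c x₀ a p γ x ≤ (γ * ca + p * μa + α) / 2 := by
  set G : ℝ → ℝ := fun u => γ * c u + p * μ u with hG
  set hA : ℝ := γ * ca + p * μa with hhA
  have hG_tendsto : Tendsto G (𝓝[>] a) (𝓝 hA) :=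
    (hca.const_mul γ).add (HC.hμa.const_mul p)
  have hIooS : Set.Ioo a xhat0 ⊆ stInt a b := Ioo_subset_stInt hxhat0
  have hGmono : ∀ u ∈ Set.Ioo a xhat0, ∀ v ∈ Set.Ioo a xhat0, u < v → G u < G v := by
    intro u hu v hv huv
    have h1 : c u ≤ c v := HC.hcmono (hIooS hu) (hIooS hv) (le_of_lt huv)
    have h2 : μ u < μ v := hμmono hu hv huv
    simp only [hG]
    nlinarith
  have hA_lt_G : ∀ u ∈ Set.Ioo a xhat0, hA < G u := by
    intro u hu
    set t := (a + u) / 2 with htdef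
    have ht : t ∈ Set.Ioo a u := ⟨by simp [htdef]; linarith [hu.1], by simp [htdef]; linarith [hu.1]⟩
    have htx : t ∈ Set.Ioo a xhat0 := ⟨ht.1, lt_trans ht.2 hu.2⟩
    have h1 : hA ≤ G t := by
      apply le_of_tendsto hG_tendsto
      filter_upwards [Ioo_mem_nhdsGT_of_mem (Set.mem_Ico.mpr ⟨le_refl a, ht.1⟩)] with z hz
      exact le_of_lt (hGmono z ⟨hz.1, lt_trans hz.2 htx.2⟩ t htx hz.2)
    exact lt_of_le_of_lt h1 (hGmono t htx u hu ht.2)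
  have h_le_G : ∀ x ∈ Set.Ioo a xhat0, hF μ σ c x₀ a p γ x ≤ G x := by
    intro x hx
    have hxS : x ∈ stInt a b := hIooS hx
    have hM := HC.toCtx.Mab_pos hxS
    rw [hF_def, div_le_iff₀ hM]
    have h1 : NNf μ σ c x₀ a p γ x ≤ ∫ u in Set.Ioo a x, G x * mDen μ σ x₀ u := by
      rw [NNf]
      apply MeasureTheory.setIntegral_mono_on (HC.int_Gm hxS)
        ((HC.hMfin x hxS).const_mul (G x)) measurableSet_Ioo
      intro u hu
      have huxh : u ∈ Set.Ioo a xhat0 := ⟨hu.1, lt_trans hu.2 hx.2⟩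
      have hGle : G u ≤ G x := le_of_lt (hGmono u huxh x hx hu.2)
      have hm := HC.toCtx.m_pos (hIooS huxh)
      show (γ * c u + p * μ u) * mDen μ σ x₀ u ≤ G x * mDen μ σ x₀ u
      exact mul_le_mul_of_nonneg_right hGle (le_of_lt hm)
    calc NNf μ σ c x₀ a p γ x ≤ ∫ u in Set.Ioo a x, G x * mDen μ σ x₀ u := h1
      _ = G x * Mab μ σ x₀ a x := by rw [MeasureTheory.integral_const_mul]; rfl
  -- hA < α
  set x₁ := (a + xhat0) / 2 with hx₁def
  have hx₁ : x₁ ∈ Set.Ioo a xhat0 :=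
    ⟨by simp [hx₁def]; linarith [hxhat0.1], by simp [hx₁def]; linarith [hxhat0.1]⟩
  have hx₁S : x₁ ∈ stInt a b := hIooS hx₁
  have hM₁ := HC.toCtx.Mab_pos hx₁S
  have hkey : hA * Mab μ σ x₀ a x₁ < NNf μ σ c x₀ a p γ x₁ := by
    have hpos : 0 < ∫ u in Set.Ioo a x₁,
        ((γ * c u + p * μ u) * mDen μ σ x₀ u - hA * mDen μ σ x₀ u) := by
      rw [MeasureTheory.setIntegral_pos_iff_support_of_nonneg_ae]
      · have hsub : Set.Ioo a x₁ ⊆ Function.support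
            (fun u => (γ * c u + p * μ u) * mDen μ σ x₀ u - hA * mDen μ σ x₀ u)
            ∩ Set.Ioo a x₁ := by
          intro u hu
          have huxh : u ∈ Set.Ioo a xhat0 := ⟨hu.1, lt_trans hu.2 hx₁.2⟩
          have hm := HC.toCtx.m_pos (hIooS huxh)
          have hGu := hA_lt_G u huxh
          refine ⟨?_, hu⟩
          simp only [Function.mem_support]
          have : (γ * c u + p * μ u) * mDen μ σ x₀ u - hA * mDen μ σ x₀ u
              = (G u - hA) * mDen μ σ x₀ u := by simp only [hG]; ring
          rw [this]
          exact ne_of_gt (mul_pos (by linarith) hm)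
        calc (0:ENNReal) < volume (Set.Ioo a x₁) := by
              rw [Real.volume_Ioo]; simp [hx₁.1]
          _ ≤ _ := measure_mono hsub
      · filter_upwards [MeasureTheory.ae_restrict_mem measurableSet_Ioo] with u hu
        have huxh : u ∈ Set.Ioo a xhat0 := ⟨hu.1, lt_trans hu.2 hx₁.2⟩
        have hm := HC.toCtx.m_pos (hIooS huxh)
        have hGu := hA_lt_G u huxh
        simp only [Pi.zero_apply]
        have : (γ * c u + p * μ u) * mDen μ σ x₀ u - hA * mDen μ σ x₀ u
            = (G u - hA) * mDen μ σ x₀ u := by simp only [hG]; ring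
        rw [this]
        exact mul_nonneg (by linarith) (le_of_lt hm)
      · exact (HC.int_Gm hx₁S).sub ((HC.hMfin x₁ hx₁S).const_mul hA)
    rw [MeasureTheory.integral_sub (HC.int_Gm hx₁S)
      ((HC.hMfin x₁ hx₁S).const_mul hA), MeasureTheory.integral_const_mul] at hpos
    rw [NNf]
    have : hA * ∫ u in Set.Ioo a x₁, mDen μ σ x₀ u = hA * Mab μ σ x₀ a x₁ := rfl
    linarith [hpos]
  have hA_lt_α : hA < α := by
    have h2 : hA < hF μ σ c x₀ a p γ x₁ := by
      rw [hF_def, lt_div_iff₀ hM₁]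
      linarith
    exact lt_of_lt_of_le h2 (hle x₁ hx₁S)
  refine ⟨hA_lt_α, ?_⟩
  -- threshold
  set βa := (hA + α) / 2 with hβa
  have hev : ∀ᶠ z in 𝓝[>] a, G z < βa :=
    hG_tendsto.eventually (eventually_lt_nhds (by rw [hβa]; linarith))
  obtain ⟨u', hu', hsub⟩ := mem_nhdsGT_iff_exists_Ioo_subset.mp hev
  have hau' : a < u' := hu'
  set t := min ((a + u') / 2) x₁ with htdef
  have hat : a < t := lt_min (by linarith) hx₁.1
  have htx₁ : t ≤ x₁ := min_le_right _ _
  have htS : t ∈ stInt a b := mem_stInt_of_lt hx₁S hat htx₁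
  refine ⟨t, htS, ?_⟩
  intro x hxS hxt
  have hxxh : x ∈ Set.Ioo a xhat0 := ⟨hxS.1, lt_of_le_of_lt (le_trans hxt htx₁) hx₁.2⟩
  have hxu' : x ∈ Set.Ioo a u' := by
    refine ⟨hxS.1, ?_⟩
    have h5 : t ≤ (a + u') / 2 := min_le_left _ _
    linarith
  exact le_trans (h_le_G x hxxh) (le_of_lt (hsub hxu'))

end CtxC
end S19
namespace S19
open MeasureTheory Filter Set Topology

lemma exhaust {a : ℝ} {b : EReal} (hab : (a : EReal) < b) {x₀ : ℝ}
    (hx₀ : x₀ ∈ stInt a b) :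
    ∃ x : ℕ → ℝ, (∀ n, x n ∈ stInt a b) ∧ (∀ n k, n ≤ k → x n ≤ x k) ∧
      (⋃ n, Set.Ioo a (x n)) = stInt a b := by
  rcases stInt_cases hab with ⟨hb, hS⟩ | ⟨b', hb, hab', hS⟩
  · refine ⟨fun n => x₀ + n, ?_, ?_, ?_⟩
    · intro n
      rw [hS] at hx₀ ⊢
      have : (0:ℝ) ≤ n := Nat.cast_nonneg n
      simp only [Set.mem_Ioi] at hx₀ ⊢
      linarith
    · intro n k hnk
      have : (n:ℝ) ≤ k := Nat.cast_le.mpr hnk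
      show x₀ + (n:ℝ) ≤ x₀ + (k:ℝ)
      linarith
    · rw [hS]
      apply Set.Subset.antisymm
      · apply Set.iUnion_subset
        intro n u hu
        exact hu.1
      · intro t ht
        obtain ⟨n, hn⟩ := exists_nat_gt (t - x₀)
        refine Set.mem_iUnion.mpr ⟨n, ht, by push_cast; linarith⟩
  · rw [hS] at hx₀
    refine ⟨fun n => b' - (b' - x₀) / (n + 1), ?_, ?_, ?_⟩
    · intro n
      rw [hS]
      have h1 : (0:ℝ) < n + 1 := by positivity
      have h2 : (b' - x₀) / (n + 1) ≤ b' - x₀ := by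
        apply div_le_self (by linarith [hx₀.2]) (by norm_num [Nat.cast_nonneg n]; )
      have h3 : 0 < (b' - x₀) / (n + 1) := div_pos (by linarith [hx₀.2]) h1
      constructor <;> [linarith [hx₀.1]; linarith]
    · intro n k hnk
      have h1 : (n:ℝ) + 1 ≤ (k:ℝ) + 1 := by
        have : (n:ℝ) ≤ k := Nat.cast_le.mpr hnk
        linarith
      have h2 := div_le_div_of_nonneg_left (by linarith [hx₀.2] : (0:ℝ) ≤ b' - x₀)
        (by positivity : (0:ℝ) < (n:ℝ) + 1) h1
      show b' - (b' - x₀) / ((n:ℝ) + 1) ≤ b' - (b' - x₀) / ((k:ℝ) + 1)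
      linarith
    · rw [hS]
      apply Set.Subset.antisymm
      · apply Set.iUnion_subset
        intro n u hu
        refine ⟨hu.1, ?_⟩
        have h3 : 0 < (b' - x₀) / ((n:ℝ) + 1) := div_pos (by linarith [hx₀.2]) (by positivity)
        linarith [hu.2]
      · intro t ht
        have htb : 0 < b' - t := by linarith [ht.2]
        obtain ⟨n, hn⟩ := exists_nat_gt ((b' - x₀) / (b' - t))
        refine Set.mem_iUnion.mpr ⟨n, ht.1, ?_⟩
        rw [div_lt_iff₀ htb] at hn
        have h1 : (b' - x₀) / ((n:ℝ) + 1) < b' - t := by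
          rw [div_lt_iff₀ (by positivity)]
          have h2 : (b' - t) * ((n:ℝ) + 1) = (n:ℝ) * (b' - t) + (b' - t) := by ring
          linarith
        linarith

namespace Ctx

variable {a : ℝ} {b : EReal} {μ σ : ℝ → ℝ} {x₀ : ℝ} (H : Ctx a b μ σ x₀)
include H

lemma Mab_mono {x y : ℝ} (hx : x ∈ stInt a b) (hy : y ∈ stInt a b) (hxy : x ≤ y) :
    Mab μ σ x₀ a x ≤ Mab μ σ x₀ a y := by
  apply MeasureTheory.setIntegral_mono_set (H.hMfin y hy)
  · filter_upwards [MeasureTheory.ae_restrict_mem measurableSet_Ioo] with u hu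
    exact le_of_lt (H.m_pos (Ioo_subset_stInt hy hu))
  · exact (Set.Ioo_subset_Ioo le_rfl hxy).eventuallyLE

end Ctx

namespace CtxC

variable {a : ℝ} {b : EReal} {μ σ c : ℝ → ℝ} {x₀ μa p γ cb : ℝ}
  (HC : CtxC a b μ σ c x₀ μa)
include HC

lemma c_le_cb (hcb : Tendsto c (atB b) (𝓝 cb)) {u : ℝ} (hu : u ∈ stInt a b) :
    c u ≤ cb := by
  have := atB_neBot HC.hab
  apply ge_of_tendsto hcb
  filter_upwards [atB_eventually_mem HC.hab, atB_eventually_ge HC.hab hu] with t h1 h2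
  exact HC.hcmono hu h1 h2

lemma NCf_nonneg {x : ℝ} (hx : x ∈ stInt a b) : 0 ≤ NCf μ σ c x₀ a x := by
  apply MeasureTheory.setIntegral_nonneg measurableSet_Ioo
  intro u hu
  have huS := Ioo_subset_stInt hx hu
  exact mul_nonneg (HC.hcnn u huS) (le_of_lt (HC.toCtx.m_pos huS))

lemma hF_decomp {x : ℝ} (hx : x ∈ stInt a b) :
    hF μ σ c x₀ a p γ x
      = γ * NCf μ σ c x₀ a x / Mab μ σ x₀ a x
        + p / (sDen μ σ x₀ x * Mab μ σ x₀ a x) := by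
  have hM := HC.toCtx.Mab_pos hx
  have hs := HC.toCtx.s_pos x
  rw [hF_def, HC.NN_eq hx]
  field_simp

lemma NCf_le_cb_Mab (hcb : Tendsto c (atB b) (𝓝 cb)) {x : ℝ} (hx : x ∈ stInt a b) :
    NCf μ σ c x₀ a x ≤ cb * Mab μ σ x₀ a x := by
  have hrw : cb * Mab μ σ x₀ a x = ∫ u in Set.Ioo a x, cb * mDen μ σ x₀ u := by
    rw [MeasureTheory.integral_const_mul]; rfl
  rw [NCf, hrw]
  apply MeasureTheory.setIntegral_mono_on (HC.int_cm hx)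
    ((HC.hMfin x hx).const_mul cb) measurableSet_Ioo
  intro u hu
  have huS := Ioo_subset_stInt hx hu
  exact mul_le_mul_of_nonneg_right (HC.c_le_cb hcb huS)
    (le_of_lt (HC.toCtx.m_pos huS))

/-- Right-boundary threshold bound for `hF`. -/
lemma b_side (hsMb : Tendsto (fun x => sDen μ σ x₀ x * Mab μ σ x₀ a x) (atB b) atTop)
    (hcb : Tendsto c (atB b) (𝓝 cb)) (hp : 0 < p) (hγ : 0 < γ)
    {α : ℝ} (hgap : γ * cbar μ σ c x₀ a b cb < α) :
    ∃ t ∈ stInt a b, ∀ x ∈ stInt a b, t ≤ x →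
      hF μ σ c x₀ a p γ x ≤ (γ * cbar μ σ c x₀ a b cb + α) / 2 := by
  set cB := cbar μ σ c x₀ a b cb with hcB
  set gap := (α - γ * cB) / 2 with hgapdef
  have hgap0 : 0 < gap := by rw [hgapdef]; linarith
  -- the s·M term threshold
  have hev1 : ∀ᶠ x in atB b, 2 * p / gap ≤ sDen μ σ x₀ x * Mab μ σ x₀ a x :=
    hsMb.eventually_ge_atTop _
  have hterm2 : ∀ x, 2 * p / gap ≤ sDen μ σ x₀ x * Mab μ σ x₀ a x → x ∈ stInt a b →
      p / (sDen μ σ x₀ x * Mab μ σ x₀ a x) ≤ gap / 2 := by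
    intro x h1 hx
    have hpos : 0 < 2 * p / gap := by positivity
    have hsM : 0 < sDen μ σ x₀ x * Mab μ σ x₀ a x := lt_of_lt_of_le hpos h1
    rw [div_le_iff₀ hsM]
    rw [div_le_iff₀ hgap0] at *
    nlinarith
  by_cases hm : IntegrableOn (mDen μ σ x₀) (stInt a b) volume
  · -- integrable case
    have hcBeq : cB = (∫ u in stInt a b, c u * mDen μ σ x₀ u)
        / (∫ u in stInt a b, mDen μ σ x₀ u) := by rw [hcB, cbar, if_pos hm]
    set Minf := ∫ u in stInt a b, mDen μ σ x₀ u with hMinf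
    set Ncinf := ∫ u in stInt a b, c u * mDen μ σ x₀ u with hNcinf
    have hm_nonneg : 0 ≤ᵐ[volume.restrict (stInt a b)] mDen μ σ x₀ := by
      filter_upwards [MeasureTheory.ae_restrict_mem HC.toCtx.hSm] with u hu
      exact le_of_lt (HC.toCtx.m_pos hu)
    have hMle : ∀ x ∈ stInt a b, Mab μ σ x₀ a x ≤ Minf := by
      intro x hx
      exact MeasureTheory.setIntegral_mono_set hm hm_nonneg
        ((Ioo_subset_stInt hx).eventuallyLE)
    have hMinfpos : 0 < Minf :=
      lt_of_lt_of_le (HC.toCtx.Mab_pos HC.hx₀) (hMle x₀ HC.hx₀)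
    have hcm_int : IntegrableOn (fun u => c u * mDen μ σ x₀ u) (stInt a b) volume := by
      apply MeasureTheory.Integrable.mono (hm.const_mul (max cb 0))
      · exact (HC.hccont.mul HC.toCtx.cont_m).aestronglyMeasurable HC.toCtx.hSm
      · filter_upwards [MeasureTheory.ae_restrict_mem HC.toCtx.hSm] with u hu
        have hmu := HC.toCtx.m_pos hu
        have hcu := HC.hcnn u hu
        have hcu2 := HC.c_le_cb hcb hu
        simp only [Real.norm_eq_abs, abs_mul, abs_of_nonneg hcu, abs_of_pos hmu]
        rw [abs_of_nonneg (le_max_right cb 0)]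
        exact mul_le_mul_of_nonneg_right (le_trans hcu2 (le_max_left cb 0)) (le_of_lt hmu)
    have hNc_le : ∀ x ∈ stInt a b, NCf μ σ c x₀ a x ≤ Ncinf := by
      intro x hx
      apply MeasureTheory.setIntegral_mono_set hcm_int
      · filter_upwards [MeasureTheory.ae_restrict_mem HC.toCtx.hSm] with u hu
        exact mul_nonneg (HC.hcnn u hu) (le_of_lt (HC.toCtx.m_pos hu))
      · exact ((Ioo_subset_stInt hx).eventuallyLE)
    have hNcinf_nonneg : 0 ≤ Ncinf := by
      apply MeasureTheory.setIntegral_nonneg HC.toCtx.hSm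
      intro u hu
      exact mul_nonneg (HC.hcnn u hu) (le_of_lt (HC.toCtx.m_pos hu))
    -- choose ε2
    have htend : Tendsto (fun e : ℝ => γ * Ncinf / (Minf - e)) (𝓝 0) (𝓝 (γ * Ncinf / Minf)) := by
      have h1 : Tendsto (fun e : ℝ => Minf - e) (𝓝 0) (𝓝 Minf) := by
        have h0 : Continuous (fun e : ℝ => Minf - e) := continuous_const.sub continuous_id
        have := h0.tendsto (0:ℝ)
        simpa using this
      exact tendsto_const_nhds.div h1 (ne_of_gt hMinfpos)
    have hev2 : ∀ᶠ e in 𝓝 (0:ℝ), γ * Ncinf / (Minf - e) < γ * Ncinf / Minf + gap / 2 :=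
      htend.eventually (eventually_lt_nhds (by linarith [hgap0]))
    have hev3 : ∀ᶠ e in 𝓝 (0:ℝ), e < Minf / 2 := by
      apply eventually_lt_nhds
      linarith
    haveI hnb : (𝓝[>] (0:ℝ)).NeBot := nhdsGT_neBot (0:ℝ)
    obtain ⟨ε2, hε2ab, hε2pos⟩ :=
      ((((hev2.and hev3).filter_mono (nhdsWithin_le_nhds (s := Set.Ioi (0:ℝ)))).and
        self_mem_nhdsWithin).exists)
    obtain ⟨hε2a, hε2b⟩ := hε2ab
    have hε2pos' : 0 < ε2 := hε2pos
    obtain ⟨xs, hxsS, hxsmono, hxsU⟩ := exhaust HC.hab HC.hx₀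
    have hMtend : Tendsto (fun n => Mab μ σ x₀ a (xs n)) atTop (𝓝 Minf) := by
      have hmono' : Monotone (fun n => Set.Ioo a (xs n)) :=
        fun n k hnk => Set.Ioo_subset_Ioo le_rfl (hxsmono n k hnk)
      have := MeasureTheory.tendsto_setIntegral_of_monotone
        (fun _ => measurableSet_Ioo) hmono' (by rw [hxsU]; exact hm)
      rwa [hxsU] at this
    have hev4 : ∀ᶠ n in atTop, Minf - ε2 < Mab μ σ x₀ a (xs n) :=
      hMtend.eventually (eventually_gt_nhds (by linarith))
    obtain ⟨n0, hn0⟩ := hev4.exists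
    obtain ⟨t1, ht1S, ht1⟩ := atB_threshold HC.hab hev1 HC.hx₀
    set t := max t1 (xs n0) with htdef
    have htS : t ∈ stInt a b := by
      rcases le_total t1 (xs n0) with h | h
      · rw [htdef, max_eq_right h]; exact hxsS n0
      · rw [htdef, max_eq_left h]; exact ht1S
    refine ⟨t, htS, ?_⟩
    intro x hx htx
    have hxt1 : t1 ≤ x := le_trans (le_max_left _ _) htx
    have hxn0 : xs n0 ≤ x := le_trans (le_max_right _ _) htx
    have h2 := hterm2 x (ht1 x hx hxt1) hx
    have hMlow : Minf - ε2 ≤ Mab μ σ x₀ a x :=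
      le_trans (le_of_lt hn0) (HC.toCtx.Mab_mono (hxsS n0) hx hxn0)
    have hMpos2 : 0 < Minf - ε2 := by linarith
    have h3 : γ * NCf μ σ c x₀ a x / Mab μ σ x₀ a x ≤ γ * Ncinf / (Minf - ε2) := by
      apply div_le_div₀ (mul_nonneg (le_of_lt hγ) hNcinf_nonneg) ?_ hMpos2 hMlow
      exact mul_le_mul_of_nonneg_left (hNc_le x hx) (le_of_lt hγ)
    rw [HC.hF_decomp hx]
    have h4 : γ * Ncinf / Minf = γ * cB := by
      rw [hcBeq]
      field_simp
    linarith [h2, h3, hε2a, h4]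
  · -- non-integrable case
    have hcBeq : cB = cb := by rw [hcB, cbar, if_neg hm]
    obtain ⟨t, htS, ht⟩ := atB_threshold HC.hab hev1 HC.hx₀
    refine ⟨t, htS, ?_⟩
    intro x hx htx
    have h2 := hterm2 x (ht x hx htx) hx
    have h3 : γ * NCf μ σ c x₀ a x / Mab μ σ x₀ a x ≤ γ * cb := by
      have hM := HC.toCtx.Mab_pos hx
      rw [div_le_iff₀ hM]
      have := HC.NCf_le_cb_Mab hcb hx
      nlinarith
    rw [HC.hF_decomp hx]
    rw [hcBeq] at hgapdef ⊢
    linarith [h2, h3]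

end CtxC
end S19
namespace S19
open MeasureTheory Filter Set Topology

namespace CtxC

variable {a : ℝ} {b : EReal} {μ σ c : ℝ → ℝ} {x₀ μa p γ : ℝ}
  (HC : CtxC a b μ σ c x₀ μa)
include HC

/-- Pointwise: `δ·M·s ≤ α·M·s − NN·s` wherever `hF ≤ α − δ`. -/
lemma psi_ge {α δ v : ℝ} (hv : v ∈ stInt a b)
    (hfv : hF μ σ c x₀ a p γ v ≤ α - δ) :
    δ * (Mab μ σ x₀ a v * sDen μ σ x₀ v)
      ≤ α * (Mab μ σ x₀ a v * sDen μ σ x₀ v)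
        - NNf μ σ c x₀ a p γ v * sDen μ σ x₀ v := by
  have hM := HC.toCtx.Mab_pos hv
  have hs := HC.toCtx.s_pos v
  rw [hF_def, div_le_iff₀ hM] at hfv
  nlinarith

lemma psi_nonneg {yh v : ℝ} (hyh : yh ∈ stInt a b)
    (hle : ∀ x ∈ stInt a b, hF μ σ c x₀ a p γ x ≤ hF μ σ c x₀ a p γ yh)
    (hv : v ∈ stInt a b) :
    0 ≤ hF μ σ c x₀ a p γ yh * (Mab μ σ x₀ a v * sDen μ σ x₀ v)
        - NNf μ σ c x₀ a p γ v * sDen μ σ x₀ v := by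
  linarith [HC.NNs_le hyh hle hv]

set_option maxHeartbeats 1600000 in
/-- The main "far interval" estimate: existence of a uniform defect `ρ`. -/
lemma FF_far {yh ε δ : ℝ} (hyh : yh ∈ stInt a b)
    (hle : ∀ x ∈ stInt a b, hF μ σ c x₀ a p γ x ≤ hF μ σ c x₀ a p γ yh)
    (hδ : 0 < δ)
    (hfar : ∀ v ∈ stInt a b, v ∉ Set.Ioo (yh - ε/2) (yh + ε/2) →
      hF μ σ c x₀ a p γ v ≤ hF μ σ c x₀ a p γ yh - δ)
    (hε : 0 < ε) (hball : Set.Icc (yh - ε) (yh + ε) ⊆ stInt a b) :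
    ∃ ρ > 0, ∀ w y K : ℝ, w ∈ stInt a b → y ∈ stInt a b → w < y → 0 < K →
      (w ∉ Set.Ioo (yh - ε) (yh + ε) ∨ y ∉ Set.Ioo (yh - ε) (yh + ε)) →
      FF μ σ c x₀ a p K γ w y ≤ hF μ σ c x₀ a p γ yh - ρ := by
  set α := hF μ σ c x₀ a p γ yh with hα
  set Bm := yh - ε/2 with hBm
  set Bp := yh + ε/2 with hBp
  set ym := yh - ε with hym
  set yp := yh + ε with hyp'
  have hymS : ym ∈ stInt a b := hball ⟨le_refl _, by rw [hym, hyp']; linarith⟩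
  have hypS : yp ∈ stInt a b := hball ⟨by rw [hym, hyp']; linarith, le_refl _⟩
  have hBmS : Bm ∈ stInt a b := hball ⟨by rw [hym, hBm]; linarith, by rw [hyp', hBm]; linarith⟩
  have hBpS : Bp ∈ stInt a b := hball ⟨by rw [hym, hBp]; linarith, by rw [hyp', hBp]; linarith⟩
  set mb := xiF μ σ x₀ a Bp - xiF μ σ x₀ a Bm with hmb
  set mp := xiF μ σ x₀ a yp - xiF μ σ x₀ a Bp with hmp
  set mm := xiF μ σ x₀ a Bm - xiF μ σ x₀ a ym with hmm
  have hmb0 : 0 < mb := HC.toCtx.xiF_sub_pos hBmS hBpS (by rw [hBm, hBp]; linarith)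
  have hmp0 : 0 < mp := HC.toCtx.xiF_sub_pos hBpS hypS (by rw [hyp', hBp]; linarith)
  have hmm0 : 0 < mm := HC.toCtx.xiF_sub_pos hymS hBmS (by rw [hym, hBm]; linarith)
  refine ⟨δ * min (1/2) (min (mp / (2 * mb)) (mm / (2 * mb))), by positivity, ?_⟩
  intro w y K hw hy hwy hK hbad
  set ρ := δ * min (1/2) (min (mp / (2 * mb)) (mm / (2 * mb))) with hρ
  have hρδ2 : ρ ≤ δ / 2 := by
    rw [hρ]
    have h1 : min (1/2) (min (mp / (2 * mb)) (mm / (2 * mb))) ≤ 1/2 := min_le_left _ _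
    nlinarith
  have hρmp : ρ ≤ δ * mp / (2 * mb) := by
    rw [hρ]
    have h1 : min (1/2) (min (mp / (2 * mb)) (mm / (2 * mb))) ≤ mp / (2*mb) :=
      le_trans (min_le_right _ _) (min_le_left _ _)
    rw [mul_div_assoc]
    nlinarith
  have hρmm : ρ ≤ δ * mm / (2 * mb) := by
    rw [hρ]
    have h1 : min (1/2) (min (mp / (2 * mb)) (mm / (2 * mb))) ≤ mm / (2*mb) :=
      le_trans (min_le_right _ _) (min_le_right _ _)
    rw [mul_div_assoc]
    nlinarith
  have hρ0 : 0 < ρ := by rw [hρ]; positivity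
  set D := xiF μ σ x₀ a y - xiF μ σ x₀ a w with hD
  have hD0 : 0 < D := HC.toCtx.xiF_sub_pos hw hy hwy
  set ψ : ℝ → ℝ := fun v => α * (Mab μ σ x₀ a v * sDen μ σ x₀ v)
      - NNf μ σ c x₀ a p γ v * sDen μ σ x₀ v with hψ
  set Ms : ℝ → ℝ := fun v => Mab μ σ x₀ a v * sDen μ σ x₀ v with hMs
  have hIccS : Set.Icc w y ⊆ stInt a b := Icc_subset_stInt HC.hab hw hy
  have hcont_ψ : ContinuousOn ψ (stInt a b) :=
    (continuousOn_const.mul HC.toCtx.cont_Ms).sub HC.cont_NNs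
  have hint_ψ : IntegrableOn ψ (Set.Ioc w y) volume :=
    ((hcont_ψ.mono hIccS).integrableOn_Icc).mono_set Set.Ioc_subset_Icc_self
  have hint_Ms : IntegrableOn Ms (Set.Ioc w y) volume :=
    ((HC.toCtx.cont_Ms.mono hIccS).integrableOn_Icc).mono_set Set.Ioc_subset_Icc_self
  have hint_NNs : IntegrableOn (fun v => NNf μ σ c x₀ a p γ v * sDen μ σ x₀ v)
      (Set.Ioc w y) volume :=
    ((HC.cont_NNs.mono hIccS).integrableOn_Icc).mono_set Set.Ioc_subset_Icc_self
  have hψ_nonneg : ∀ v ∈ Set.Ioc w y, 0 ≤ ψ v := by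
    intro v hv
    exact HC.psi_nonneg hyh hle (hIccS (Set.Ioc_subset_Icc_self hv))
  have hψae : 0 ≤ᵐ[volume.restrict (Set.Ioc w y)] ψ := by
    filter_upwards [MeasureTheory.ae_restrict_mem measurableSet_Ioc] with v hv
    exact hψ_nonneg v hv
  -- IΨ identity
  have hIPsi : (∫ v in Set.Ioc w y, ψ v)
      = α * D - ∫ v in w..y, NNf μ σ c x₀ a p γ v * sDen μ σ x₀ v := by
    have h1 : (∫ v in Set.Ioc w y, ψ v)
        = (∫ v in Set.Ioc w y, α * Ms v)
          - ∫ v in Set.Ioc w y, NNf μ σ c x₀ a p γ v * sDen μ σ x₀ v :=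
      MeasureTheory.integral_sub (hint_Ms.const_mul α) hint_NNs
    rw [h1, MeasureTheory.integral_const_mul, intervalIntegral.integral_of_le (le_of_lt hwy)]
    have h2 : (∫ v in Set.Ioc w y, Ms v) = D := by
      rw [hD, HC.toCtx.xiF_sub hw hy, intervalIntegral.integral_of_le (le_of_lt hwy)]
    rw [h2]
  -- xi over Ioc subinterval
  have hxi_Ioc : ∀ u v : ℝ, u ∈ stInt a b → v ∈ stInt a b → u ≤ v →
      (∫ t in Set.Ioc u v, Ms t) = xiF μ σ x₀ a v - xiF μ σ x₀ a u := by
    intro u v hu hv huv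
    rw [HC.toCtx.xiF_sub hu hv, intervalIntegral.integral_of_le huv]
  -- E-lemma
  have hElem : ∀ u v : ℝ, u ∈ stInt a b → v ∈ stInt a b → u ≤ v →
      w ≤ u → v ≤ y → Set.Ioc u v ∩ Set.Ioo Bm Bp = ∅ →
      δ * (xiF μ σ x₀ a v - xiF μ σ x₀ a u) ≤ ∫ t in Set.Ioc w y, ψ t := by
    intro u v hu hv huv hwu hvy hdisj
    have hsub : Set.Ioc u v ⊆ Set.Ioc w y := Set.Ioc_subset_Ioc hwu hvy
    have h1 : δ * (xiF μ σ x₀ a v - xiF μ σ x₀ a u) = ∫ t in Set.Ioc u v, δ * Ms t := by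
      rw [MeasureTheory.integral_const_mul, hxi_Ioc u v hu hv huv]
    rw [h1]
    have h2 : (∫ t in Set.Ioc u v, δ * Ms t) ≤ ∫ t in Set.Ioc u v, ψ t := by
      apply MeasureTheory.setIntegral_mono_on
        ((hint_Ms.mono_set hsub).const_mul δ) (hint_ψ.mono_set hsub) measurableSet_Ioc
      intro t ht
      have htS : t ∈ stInt a b := hIccS (Set.Ioc_subset_Icc_self (hsub ht))
      have htout : t ∉ Set.Ioo Bm Bp := by
        intro hmem
        exact absurd (Set.mem_inter ht hmem) (by rw [hdisj]; exact Set.notMem_empty t)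
      exact HC.psi_ge htS (hfar t htS htout)
    apply le_trans h2
    exact MeasureTheory.setIntegral_mono_set hint_ψ hψae hsub.eventuallyLE
  -- general bound
  have hGen : δ * (D - mb) ≤ ∫ t in Set.Ioc w y, ψ t := by
    set T := Set.Ioc w y ∩ Set.Ioo Bm Bp with hT
    have hTsub : T ⊆ Set.Ioc w y := Set.inter_subset_left
    have hTm : MeasurableSet T := measurableSet_Ioc.inter measurableSet_Ioo
    have hdiff : (∫ t in Set.Ioc w y \ T, Ms t)
        = (∫ t in Set.Ioc w y, Ms t) - ∫ t in T, Ms t := by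
      rw [MeasureTheory.integral_diff hTm hint_Ms hTsub]
    have hTle : (∫ t in T, Ms t) ≤ mb := by
      have hBsub : T ⊆ Set.Ioo Bm Bp := Set.inter_subset_right
      have hint_MsB : IntegrableOn Ms (Set.Ioo Bm Bp) volume :=
        ((HC.toCtx.cont_Ms.mono (Icc_subset_stInt HC.hab hBmS hBpS)).integrableOn_Icc).mono_set
          Set.Ioo_subset_Icc_self
      have h3 : (∫ t in T, Ms t) ≤ ∫ t in Set.Ioo Bm Bp, Ms t := by
        apply MeasureTheory.setIntegral_mono_set hint_MsB
        · filter_upwards [MeasureTheory.ae_restrict_mem measurableSet_Ioo] with t ht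
          have htS : t ∈ stInt a b := Icc_subset_stInt HC.hab hBmS hBpS (Set.Ioo_subset_Icc_self ht)
          exact le_of_lt (mul_pos (HC.toCtx.Mab_pos htS) (HC.toCtx.s_pos t))
        · exact hBsub.eventuallyLE
      have h4 : (∫ t in Set.Ioo Bm Bp, Ms t) = mb := by
        rw [← MeasureTheory.integral_Ioc_eq_integral_Ioo]
        exact hxi_Ioc Bm Bp hBmS hBpS (by rw [hBm, hBp]; linarith)
      linarith
    have h5 : (∫ t in Set.Ioc w y \ T, ψ t) ≤ ∫ t in Set.Ioc w y, ψ t :=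
      MeasureTheory.setIntegral_mono_set hint_ψ hψae (Set.diff_subset).eventuallyLE
    have h6 : (∫ t in Set.Ioc w y \ T, δ * Ms t) ≤ ∫ t in Set.Ioc w y \ T, ψ t := by
      apply MeasureTheory.setIntegral_mono_on
        ((hint_Ms.mono_set Set.diff_subset).const_mul δ)
        (hint_ψ.mono_set Set.diff_subset) (measurableSet_Ioc.diff hTm)
      intro t ht
      have htS : t ∈ stInt a b := hIccS (Set.Ioc_subset_Icc_self ht.1)
      have htout : t ∉ Set.Ioo Bm Bp := fun hmem => ht.2 (Set.mem_inter ht.1 hmem)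
      exact HC.psi_ge htS (hfar t htS htout)
    have h7 : (∫ t in Set.Ioc w y \ T, δ * Ms t)
        = δ * ((∫ t in Set.Ioc w y, Ms t) - ∫ t in T, Ms t) := by
      rw [MeasureTheory.integral_const_mul, hdiff]
    have h8 : (∫ t in Set.Ioc w y, Ms t) = D := hxi_Ioc w y hw hy (le_of_lt hwy)
    nlinarith [hTle]
  -- conclude
  -- conclude
  have hFFle : FF μ σ c x₀ a p K γ w y
      ≤ (∫ v in w..y, NNf μ σ c x₀ a p γ v * sDen μ σ x₀ v) / D := by
    rw [HC.FF_formula hw hy K, ← hD]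
    rw [div_le_div_iff₀ hD0 hD0]
    nlinarith [mul_pos hK hD0]
  have hkey : ρ * D ≤ ∫ t in Set.Ioc w y, ψ t := by
    rcases le_or_gt (2 * mb) D with hDbig | hDsmall
    · have hA1 : ρ * D ≤ (δ / 2) * D := mul_le_mul_of_nonneg_right hρδ2 hD0.le
      have hA2 : (δ / 2) * D ≤ δ * (D - mb) := by
        nlinarith [mul_nonneg hδ.le (sub_nonneg.mpr hDbig)]
      exact le_trans (le_trans hA1 hA2) hGen
    · have hcases : (y ≤ Bm ∨ Bp ≤ w) ∨ (yp ≤ y ∧ w ≤ Bp) ∨ (w ≤ ym ∧ Bm ≤ y) := by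
        rcases hbad with hb | hb
        · rw [Set.mem_Ioo, not_and_or, not_lt, not_lt] at hb
          rcases hb with h | h
          · rcases le_or_gt y Bm with h2 | h2
            · exact Or.inl (Or.inl h2)
            · exact Or.inr (Or.inr ⟨h, le_of_lt h2⟩)
          · exact Or.inl (Or.inr (le_trans (by rw [hBp, hyp']; linarith) h))
        · rw [Set.mem_Ioo, not_and_or, not_lt, not_lt] at hb
          rcases hb with h | h
          · exact Or.inl (Or.inl (le_trans h (by rw [hBm, hym]; linarith)))
          · rcases le_or_gt w Bp with h2 | h2
            · exact Or.inr (Or.inl ⟨h, h2⟩)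
            · exact Or.inl (Or.inr (le_of_lt h2))
      have hρδ : ρ ≤ δ := le_trans hρδ2 (by linarith)
      rcases hcases with (h | h) | ⟨h1, h2⟩ | ⟨h1, h2⟩
      · have hdisj : Set.Ioc w y ∩ Set.Ioo Bm Bp = ∅ := by
          ext t
          simp only [Set.mem_inter_iff, Set.mem_Ioc, Set.mem_Ioo,
            Set.mem_empty_iff_false, iff_false, not_and]
          rintro ⟨_, ht2⟩ ht3
          intro hcon
          linarith
        have hE := hElem w y hw hy (le_of_lt hwy) le_rfl le_rfl hdisj
        rw [← hD] at hE
        have hA1 : ρ * D ≤ δ * D := mul_le_mul_of_nonneg_right hρδ hD0.le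
        linarith
      · have hdisj : Set.Ioc w y ∩ Set.Ioo Bm Bp = ∅ := by
          ext t
          simp only [Set.mem_inter_iff, Set.mem_Ioc, Set.mem_Ioo,
            Set.mem_empty_iff_false, iff_false, not_and]
          rintro ⟨ht1, _⟩ ht3
          intro hcon
          linarith
        have hE := hElem w y hw hy (le_of_lt hwy) le_rfl le_rfl hdisj
        rw [← hD] at hE
        have hA1 : ρ * D ≤ δ * D := mul_le_mul_of_nonneg_right hρδ hD0.le
        linarith
      · -- mp case
        have hBpyp : Bp ≤ yp := by rw [hBp, hyp']; linarith
        have hdisj : Set.Ioc Bp y ∩ Set.Ioo Bm Bp = ∅ := by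
          ext t
          simp only [Set.mem_inter_iff, Set.mem_Ioc, Set.mem_Ioo,
            Set.mem_empty_iff_false, iff_false, not_and]
          rintro ⟨ht1, _⟩ ht3
          intro hcon
          linarith
        have hE := hElem Bp y hBpS hy (le_trans hBpyp h1) h2 le_rfl hdisj
        have hmono := HC.toCtx.xiF_mono hypS hy h1
        have hA1 : ρ * D ≤ ρ * (2 * mb) := mul_le_mul_of_nonneg_left hDsmall.le hρ0.le
        have hA2 : ρ * (2 * mb) ≤ δ * mp := by
          have := (le_div_iff₀ (by positivity : (0:ℝ) < 2 * mb)).mp hρmp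
          linarith
        have hA3 : δ * mp ≤ δ * (xiF μ σ x₀ a y - xiF μ σ x₀ a Bp) := by
          apply mul_le_mul_of_nonneg_left ?_ hδ.le
          rw [hmp]
          linarith
        linarith
      · -- mm case
        have hymBm : ym ≤ Bm := by rw [hBm, hym]; linarith
        have hdisj : Set.Ioc w Bm ∩ Set.Ioo Bm Bp = ∅ := by
          ext t
          simp only [Set.mem_inter_iff, Set.mem_Ioc, Set.mem_Ioo,
            Set.mem_empty_iff_false, iff_false, not_and]
          rintro ⟨_, ht2⟩ ht3
          intro hcon
          linarith
        have hE := hElem w Bm hw hBmS (le_trans h1 hymBm) le_rfl h2 hdisj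
        have hmono := HC.toCtx.xiF_mono hw hymS h1
        have hA1 : ρ * D ≤ ρ * (2 * mb) := mul_le_mul_of_nonneg_left hDsmall.le hρ0.le
        have hA2 : ρ * (2 * mb) ≤ δ * mm := by
          have := (le_div_iff₀ (by positivity : (0:ℝ) < 2 * mb)).mp hρmm
          linarith
        have hA3 : δ * mm ≤ δ * (xiF μ σ x₀ a Bm - xiF μ σ x₀ a w) := by
          apply mul_le_mul_of_nonneg_left ?_ hδ.le
          rw [hmm]
          linarith
        linarith
  have hfinal : (∫ v in w..y, NNf μ σ c x₀ a p γ v * sDen μ σ x₀ v) / D ≤ α - ρ := by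
    rw [div_le_iff₀ hD0]
    have hk2 := hkey
    rw [hIPsi] at hk2
    nlinarith
  linarith [hFFle, hfinal]

end CtxC
end S19
namespace S19
open MeasureTheory Filter Set Topology

namespace CtxC

variable {a : ℝ} {b : EReal} {μ σ c : ℝ → ℝ} {x₀ μa p γ ca cb : ℝ} {xhat0 : ℝ}
  (HC : CtxC a b μ σ c x₀ μa)
include HC

/-- Uniform strict defect of `hF` outside any ball around the maximiser. -/
lemma far_bound (hca : Tendsto c (𝓝[>] a) (𝓝 ca))
    (hxhat0 : xhat0 ∈ stInt a b) (hμmono : StrictMonoOn μ (Set.Ioo a xhat0))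
    (hsMb : Tendsto (fun x => sDen μ σ x₀ x * Mab μ σ x₀ a x) (atB b) atTop)
    (hcb : Tendsto c (atB b) (𝓝 cb)) (hp : 0 < p) (hγ : 0 < γ)
    {yh : ℝ} (hyh : yh ∈ stInt a b)
    (hymax : ∀ x ∈ stInt a b, x ≠ yh → hF μ σ c x₀ a p γ x < hF μ σ c x₀ a p γ yh)
    (hgap : γ * cbar μ σ c x₀ a b cb < hF μ σ c x₀ a p γ yh)
    {ε : ℝ} (hε : 0 < ε) :
    ∃ δ > 0, ∀ v ∈ stInt a b, v ∉ Set.Ioo (yh - ε) (yh + ε) →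
      hF μ σ c x₀ a p γ v ≤ hF μ σ c x₀ a p γ yh - δ := by
  set α := hF μ σ c x₀ a p γ yh with hα
  have hle : ∀ x ∈ stInt a b, hF μ σ c x₀ a p γ x ≤ α := by
    intro x hx
    by_cases hxy : x = yh
    · subst hxy; exact le_rfl
    · exact le_of_lt (hymax x hx hxy)
  obtain ⟨hAlt, t_a, htaS, hta⟩ := HC.a_side hca hxhat0 hμmono hp hγ hle
  obtain ⟨t_b, htbS, htb⟩ := HC.b_side hsMb hcb hp hγ hgap
  set βa := (γ * ca + p * μa + α) / 2 with hβa
  set βb := (γ * cbar μ σ c x₀ a b cb + α) / 2 with hβb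
  have hβa_lt : βa < α := by rw [hβa]; linarith
  have hβb_lt : βb < α := by rw [hβb]; linarith
  set Kset := Set.Icc t_a t_b \ Set.Ioo (yh - ε) (yh + ε) with hKset
  have hKcomp : IsCompact Kset := isCompact_Icc.diff isOpen_Ioo
  have hKsetS : Kset ⊆ stInt a b :=
    fun v hv => Icc_subset_stInt HC.hab htaS htbS hv.1
  have hyh_ball : yh ∈ Set.Ioo (yh - ε) (yh + ε) := ⟨by linarith, by linarith⟩
  have hmid : ∃ βm, βm < α ∧ ∀ v ∈ Kset, hF μ σ c x₀ a p γ v ≤ βm := by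
    by_cases hne : Kset.Nonempty
    · obtain ⟨z, hzK, hzmax⟩ := hKcomp.exists_isMaxOn hne (HC.cont_hF.mono hKsetS)
      have hzne : z ≠ yh := by
        intro heq
        exact hzK.2 (heq ▸ hyh_ball)
      exact ⟨hF μ σ c x₀ a p γ z, hymax z (hKsetS hzK) hzne, fun v hv => hzmax hv⟩
    · exact ⟨βa, hβa_lt, fun v hv => absurd ⟨v, hv⟩ hne⟩
  obtain ⟨βm, hβm_lt, hβm⟩ := hmid
  set β := max βa (max βb βm) with hβ
  have hβlt : β < α := by
    rw [hβ]
    exact max_lt hβa_lt (max_lt hβb_lt hβm_lt)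
  refine ⟨α - β, by linarith, ?_⟩
  intro v hv hvball
  have hgoal : hF μ σ c x₀ a p γ v ≤ β := by
    rcases le_or_gt v t_a with h1 | h1
    · exact le_trans (hta v hv h1) (le_max_left _ _)
    · rcases le_or_gt t_b v with h2 | h2
      · exact le_trans (htb v hv h2) (le_trans (le_max_left _ _) (le_max_right _ _))
      · have hvK : v ∈ Kset := ⟨⟨le_of_lt h1, le_of_lt h2⟩, hvball⟩
        exact le_trans (hβm v hvK) (le_trans (le_max_right _ _) (le_max_right _ _))
  linarith

/-- Near-optimal stationary pairs close to `yh`. -/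
lemma FF_near {yh : ℝ} (hyh : yh ∈ stInt a b) {ε' : ℝ} (hε' : 0 < ε') :
    ∃ w y : ℝ, w ∈ stInt a b ∧ y ∈ stInt a b ∧ w < y ∧
      ∀ K : ℝ, hF μ σ c x₀ a p γ yh - ε'
          - K / (xiF μ σ x₀ a y - xiF μ σ x₀ a w)
        ≤ FF μ σ c x₀ a p K γ w y := by
  set α := hF μ σ c x₀ a p γ yh with hα
  have hcontAt : ContinuousAt (hF μ σ c x₀ a p γ) yh :=
    HC.cont_hF.continuousAt (HC.toCtx.hSo.mem_nhds hyh)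
  have hev1 : ∀ᶠ v in 𝓝 yh, α - ε' < hF μ σ c x₀ a p γ v :=
    hcontAt.eventually (eventually_gt_nhds (by linarith))
  have hev2 : ∀ᶠ v in 𝓝 yh, v ∈ stInt a b := HC.toCtx.hSo.mem_nhds hyh
  obtain ⟨η, hη, hsub⟩ := Metric.eventually_nhds_iff.mp (hev1.and hev2)
  set w := yh - η / 2 with hw
  set y := yh + η / 2 with hy
  have hmemw : dist w yh < η := by
    rw [hw, Real.dist_eq]
    rw [abs_of_nonpos (by linarith)]
    linarith
  have hmemy : dist y yh < η := by
    rw [hy, Real.dist_eq]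
    rw [abs_of_nonneg (by linarith)]
    linarith
  have hwS : w ∈ stInt a b := (hsub hmemw).2
  have hyS : y ∈ stInt a b := (hsub hmemy).2
  have hwy : w < y := by rw [hw, hy]; linarith
  refine ⟨w, y, hwS, hyS, hwy, ?_⟩
  intro K
  apply HC.FF_ge hwS hyS hwy
  intro v hv
  have hvd : dist v yh < η := by
    rw [Real.dist_eq, abs_lt]
    constructor
    · have := hv.1; rw [hw] at this; linarith
    · have := hv.2; rw [hy] at this; linarith
  have hvS : v ∈ stInt a b := (hsub hvd).2
  have hvlb : α - ε' < hF μ σ c x₀ a p γ v := (hsub hvd).1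
  have hM := HC.toCtx.Mab_pos hvS
  have hs := HC.toCtx.s_pos v
  rw [hF_def, lt_div_iff₀ hM] at hvlb
  nlinarith

end CtxC
end S19

theorem statement19    (a : ℝ) (b : EReal) (hab : (a : EReal) < b)
    (μ σ : ℝ → ℝ) (x₀ : ℝ) (hx₀ : x₀ ∈ stInt a b)
    (hμcont : ContinuousOn μ (stInt a b)) (hσcont : ContinuousOn σ (stInt a b))
    (hσpos : ∀ x ∈ stInt a b, 0 < (σ x) ^ 2)
    (hMfin : ∀ x ∈ stInt a b, IntegrableOn (mDen μ σ x₀) (Set.Ioo a x))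
    (hsa : Tendsto (sDen μ σ x₀) (𝓝[>] a) atTop)
    (hsMb : Tendsto (fun x => sDen μ σ x₀ x * Mab μ σ x₀ a x) (atB b) atTop)
    (hbnat : Tendsto (xiF μ σ x₀ a) (atB b) atTop)
    (μa : ℝ) (hμa : Tendsto μ (𝓝[>] a) (𝓝 μa))
    (c : ℝ → ℝ) (hccont : ContinuousOn c (stInt a b))
    (hcnn : ∀ x ∈ stInt a b, 0 ≤ c x) (hcmono : MonotoneOn c (stInt a b))
    (ca cb : ℝ) (hca : Tendsto c (𝓝[>] a) (𝓝 ca)) (hcb : Tendsto c (atB b) (𝓝 cb))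
    (hca0 : 0 ≤ ca) (hcacb : ca < cb)
    (xhat0 : ℝ) (hxhat0 : xhat0 ∈ stInt a b)
    (hμmono : StrictMonoOn μ (Set.Ioo a xhat0))
    (hμconc : ConcaveOn ℝ {x : ℝ | xhat0 < x ∧ (x : EReal) < b} μ)
    (hcconc : ConcaveOn ℝ {x : ℝ | xhat0 < x ∧ (x : EReal) < b} c)
    (p γ : ℝ) (hp : 0 < p) (hγ : 0 < γ)
    (K₀ : ℝ) (hK₀ : 0 < K₀)
    (hint : ∃ w y : ℝ, a < w ∧ w < y ∧ (y : EReal) < b ∧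
      γ * cbar μ σ c x₀ a b cb < FF μ σ c x₀ a p K₀ γ w y)
    (yh : ℝ) (hyh : yh ∈ stInt a b)
    (hymax : ∀ x ∈ stInt a b, x ≠ yh → hF μ σ c x₀ a p γ x < hF μ σ c x₀ a p γ yh)
    (wstar ystar : ℝ → ℝ)
    (hmax : ∀ K : ℝ, 0 < K → K ≤ K₀ →
      a < wstar K ∧ wstar K < ystar K ∧ ((ystar K : ℝ) : EReal) < b ∧
      (∀ w y : ℝ, a < w → w < y → (y : EReal) < b →
        FF μ σ c x₀ a p K γ w y ≤ FF μ σ c x₀ a p K γ (wstar K) (ystar K)) ∧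
      (∀ w y : ℝ, a < w → w < y → (y : EReal) < b →
        (∀ w' y' : ℝ, a < w' → w' < y' → (y' : EReal) < b →
          FF μ σ c x₀ a p K γ w' y' ≤ FF μ σ c x₀ a p K γ w y) →
        w = wstar K ∧ y = ystar K)) :
    (∀ K₁ K₂ : ℝ, 0 < K₁ → K₁ < K₂ → K₂ ≤ K₀ →
      FF μ σ c x₀ a p K₂ γ (wstar K₂) (ystar K₂) <
        FF μ σ c x₀ a p K₁ γ (wstar K₁) (ystar K₁)) ∧
    (∀ K : ℝ, 0 < K → K ≤ K₀ →
      FF μ σ c x₀ a p K γ (wstar K) (ystar K) < hF μ σ c x₀ a p γ yh) ∧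
    Tendsto (fun K => FF μ σ c x₀ a p K γ (wstar K) (ystar K)) (𝓝[>] (0 : ℝ))
      (𝓝 (hF μ σ c x₀ a p γ yh)) ∧
    Tendsto wstar (𝓝[>] (0 : ℝ)) (𝓝 yh) ∧
    Tendsto ystar (𝓝[>] (0 : ℝ)) (𝓝 yh) := by
  have HC : S19.CtxC a b μ σ c x₀ μa :=
    ⟨⟨hab, hx₀, hμcont, hσcont, hσpos, hMfin, hsa⟩, hμa, hccont, hcnn, hcmono⟩
  have hle : ∀ x ∈ stInt a b, hF μ σ c x₀ a p γ x ≤ hF μ σ c x₀ a p γ yh := by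
    intro x hx
    by_cases hxy : x = yh
    · subst hxy; exact le_rfl
    · exact le_of_lt (hymax x hx hxy)
  have hmem : ∀ {w y : ℝ}, a < w → w < y → (y : EReal) < b →
      w ∈ stInt a b ∧ y ∈ stInt a b := by
    intro w y h1 h2 h3
    exact ⟨⟨h1, lt_trans (by exact_mod_cast h2) h3⟩, ⟨lt_trans h1 h2, h3⟩⟩
  have part1 : ∀ K₁ K₂ : ℝ, 0 < K₁ → K₁ < K₂ → K₂ ≤ K₀ →
      FF μ σ c x₀ a p K₂ γ (wstar K₂) (ystar K₂)
        < FF μ σ c x₀ a p K₁ γ (wstar K₁) (ystar K₁) := by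
    intro K₁ K₂ h1 h2 h3
    obtain ⟨ha2, hb2, hc2, _, _⟩ := hmax K₂ (lt_trans h1 h2) h3
    obtain ⟨ha1, hb1, hc1, hmax1, _⟩ := hmax K₁ h1 (le_of_lt (lt_of_lt_of_le h2 h3))
    obtain ⟨hw2S, hy2S⟩ := hmem ha2 hb2 hc2
    have hD2 := HC.toCtx.xiF_sub_pos hw2S hy2S hb2
    have hdiff := HC.FF_K_diff (p := p) (γ := γ) hw2S hy2S K₁ K₂
    have hstep : FF μ σ c x₀ a p K₂ γ (wstar K₂) (ystar K₂)
        < FF μ σ c x₀ a p K₁ γ (wstar K₂) (ystar K₂) := by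
      rw [hdiff]
      have hq : 0 < (K₂ - K₁)
          / (xiF μ σ x₀ a (ystar K₂) - xiF μ σ x₀ a (wstar K₂)) :=
        div_pos (by linarith) hD2
      linarith
    exact lt_of_lt_of_le hstep (hmax1 _ _ ha2 hb2 hc2)
  have part2 : ∀ K : ℝ, 0 < K → K ≤ K₀ →
      FF μ σ c x₀ a p K γ (wstar K) (ystar K) < hF μ σ c x₀ a p γ yh := by
    intro K h1 h2
    obtain ⟨ha1, hb1, hc1, _, _⟩ := hmax K h1 h2
    obtain ⟨hwS, hyS⟩ := hmem ha1 hb1 hc1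
    exact HC.FF_lt hyh hle hwS hyS hb1 h1
  have hcbarlt : γ * cbar μ σ c x₀ a b cb < hF μ σ c x₀ a p γ yh := by
    obtain ⟨w', y', h1, h2, h3, h4⟩ := hint
    obtain ⟨hwS, hyS⟩ := hmem h1 h2 h3
    exact lt_trans h4 (HC.FF_lt hyh hle hwS hyS h2 hK₀)
  have part3 : Tendsto (fun K => FF μ σ c x₀ a p K γ (wstar K) (ystar K))
      (𝓝[>] (0:ℝ)) (𝓝 (hF μ σ c x₀ a p γ yh)) := by
    rw [tendsto_order]
    constructor
    · intro l hl
      set ε' := (hF μ σ c x₀ a p γ yh - l) / 2 with hε'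
      have hε'0 : (0:ℝ) < ε' := by rw [hε']; linarith
      obtain ⟨w, y, hwS, hyS, hwy, hlb⟩ := HC.FF_near hyh hε'0
      have hD := HC.toCtx.xiF_sub_pos hwS hyS hwy
      have hIoo : Set.Ioo (0:ℝ)
          (min K₀ (ε' * (xiF μ σ x₀ a y - xiF μ σ x₀ a w))) ∈ 𝓝[>] (0:ℝ) :=
        Ioo_mem_nhdsGT_of_mem ⟨le_refl _, lt_min hK₀ (by positivity)⟩
      filter_upwards [hIoo] with K hK
      have hK1 : 0 < K := hK.1
      have hK2 : K ≤ K₀ := le_of_lt (lt_of_lt_of_le hK.2 (min_le_left _ _))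
      have hK3 : K < ε' * (xiF μ σ x₀ a y - xiF μ σ x₀ a w) :=
        lt_of_lt_of_le hK.2 (min_le_right _ _)
      obtain ⟨ha1, hb1, hc1, hmax1, _⟩ := hmax K hK1 hK2
      have h5 := hlb K
      have h6 := hmax1 w y hwS.1 hwy hyS.2
      have h7 : K / (xiF μ σ x₀ a y - xiF μ σ x₀ a w) < ε' := by
        rw [div_lt_iff₀ hD]; linarith [hK3]
      calc l = hF μ σ c x₀ a p γ yh - 2*ε' := by rw [hε']; ring
        _ < hF μ σ c x₀ a p γ yh - ε'
            - K / (xiF μ σ x₀ a y - xiF μ σ x₀ a w) := by linarith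
        _ ≤ FF μ σ c x₀ a p K γ w y := h5
        _ ≤ FF μ σ c x₀ a p K γ (wstar K) (ystar K) := h6
    · intro u hu
      filter_upwards [Ioc_mem_nhdsGT_of_mem ⟨le_refl (0:ℝ), hK₀⟩] with K hK
      exact lt_trans (part2 K hK.1 hK.2) hu
  have part45 : ∀ ε : ℝ, 0 < ε → ∀ᶠ K in 𝓝[>] (0:ℝ),
      |wstar K - yh| < ε ∧ |ystar K - yh| < ε := by
    intro ε hε
    obtain ⟨r, hr, hrball⟩ := Metric.isOpen_iff.mp (S19.isOpen_stInt hab) yh hyh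
    set ε₁ := min (ε/2) (r/2) with hε₁
    have hε₁0 : 0 < ε₁ := lt_min (by linarith) (by linarith)
    have hball : Set.Icc (yh - ε₁) (yh + ε₁) ⊆ stInt a b := by
      intro v hv
      apply hrball
      rw [Metric.mem_ball, Real.dist_eq, abs_lt]
      have h1 : ε₁ ≤ r/2 := min_le_right _ _
      constructor
      · linarith [hv.1]
      · linarith [hv.2]
    obtain ⟨δ, hδ0, hfar⟩ := HC.far_bound hca hxhat0 hμmono hsMb hcb hp hγ hyh hymax
      hcbarlt (show (0:ℝ) < ε₁/2 by linarith)
    obtain ⟨ρ, hρ0, hFFfar⟩ := HC.FF_far hyh hle hδ0 hfar hε₁0 hball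
    filter_upwards [part3.eventually (eventually_gt_nhds
        (by linarith : hF μ σ c x₀ a p γ yh - ρ < hF μ σ c x₀ a p γ yh)),
      Ioc_mem_nhdsGT_of_mem ⟨le_refl (0:ℝ), hK₀⟩] with K h1 h2
    obtain ⟨ha1, hb1, hc1, _, _⟩ := hmax K h2.1 h2.2
    obtain ⟨hwS, hyS⟩ := hmem ha1 hb1 hc1
    have hboth : wstar K ∈ Set.Ioo (yh - ε₁) (yh + ε₁)
        ∧ ystar K ∈ Set.Ioo (yh - ε₁) (yh + ε₁) := by
      by_contra hb2
      rw [not_and_or] at hb2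
      have hcontr := hFFfar (wstar K) (ystar K) K hwS hyS hb1 h2.1 hb2
      have h1' : hF μ σ c x₀ a p γ yh - ρ
          < FF μ σ c x₀ a p K γ (wstar K) (ystar K) := h1
      linarith
    have hε₁ε : ε₁ ≤ ε/2 := min_le_left _ _
    constructor
    · rw [abs_lt]
      constructor
      · linarith [hboth.1.1]
      · linarith [hboth.1.2]
    · rw [abs_lt]
      constructor
      · linarith [hboth.2.1]
      · linarith [hboth.2.2]
  refine ⟨part1, part2, part3, ?_, ?_⟩
  · rw [Metric.tendsto_nhds]
    intro ε hε
    filter_upwards [part45 ε hε] with K hK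
    rw [Real.dist_eq]
    exact hK.1
  · rw [Metric.tendsto_nhds]
    intro ε hε
    filter_upwards [part45 ε hε] with K hK
    rw [Real.dist_eq]
    exact hK.2
end
end
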